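/- arXiv:2209.12345 — 3 statements merged into one kernel-verified Lean document; each statement's English description precedes it below -/
import Mathlib

section
/- Let N ≥ 2 and H ≥ 1, let π be a uniformly random permutation of {1,…,N}, let M_1,…,M_H be fixed real N×N matrices, and set Γ_h = ∑_{i=1}^N M_h(i,π(i)) and Γ = (Γ_1,…,Γ_H). Assume the covariance matrix V = Cov(Γ) is positive definite and let Ṽ = V^{-1/2} (the inverse of the positive-definite square root of V). Define M'_h(i,j) = M_h(i,j) − N^{-1} ∑_{j'=1}^N M_h(i,j') − N^{-1} ∑_{i'=1}^N M_h(i',j) + N^{-2} ∑_{i',j'=1}^N M_h(i',j'), and M''_h = ∑_{l=1}^H Ṽ_{hl} M'_l. Then: (i) every row sum and every column sum of each M''_h equals zero, Tr((M''_h)ᵀ M''_h) = N−1 for every h, Tr((M''_h)ᵀ M''_l) = 0 for h ≠ l, and V^{-1/2}(Γ − E[Γ]) = (∑_{i=1}^N M''_1(i,π(i)), …, ∑_{i=1}^N M''_H(i,π(i)))ᵀ; (ii) max_{h,i,j} |M''_h(i,j)| ≤ λ_min(V)^{-1/2} · √H · max_{h,i,j} |M'_h(i,j)|, where λ_min(V)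 denotes the smallest eigenvalue of V. -/
open Finset Matrix
open scoped Classical MatrixOrder

noncomputable section

/-- Expectation with respect to the uniform distribution on the symmetric group of
permutations of `{1,…,N}`. -/
def pexp {N : ℕ} (f : Equiv.Perm (Fin N) → ℝ) : ℝ :=
  (∑ π : Equiv.Perm (Fin N), f π) / (Nat.factorial N : ℝ)

/-- Smallest eigenvalue of a (symmetric) matrix, via the Rayleigh quotient. -/
def lamMin {n : Type*} [Fintype n] (A : Matrix n n ℝ) : ℝ :=
  ⨅ x : {x : n → ℝ // (∑ i, x i ^ 2) = 1}, x.1 ⬝ᵥ A.mulVec x.1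


lemma card_fiber_one {N : ℕ} (i j j' : Fin N) :
    (Finset.univ.filter fun π : Equiv.Perm (Fin N) => π i = j).card
      = (Finset.univ.filter fun π : Equiv.Perm (Fin N) => π i = j').card := by
  apply Finset.card_bij' (fun π _ => Equiv.swap j j' * π) (fun π _ => Equiv.swap j j' * π)
  · intro π hπ
    simp only [Finset.mem_filter, Finset.mem_univ, true_and] at hπ ⊢
    simp [hπ]
  · intro π hπ
    simp only [Finset.mem_filter, Finset.mem_univ, true_and] at hπ ⊢
    simp [hπ]
  · intro π _
    rw [← mul_assoc, Equiv.swap_mul_self, one_mul]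
  · intro π _
    rw [← mul_assoc, Equiv.swap_mul_self, one_mul]

lemma sum_perm_one {N : ℕ} (i : Fin N) (g : Fin N → ℝ) :
    ∑ π : Equiv.Perm (Fin N), g (π i)
      = (N.factorial : ℝ) / N * ∑ j, g j := by
  have hNpos : 0 < N := i.pos
  have hcard : ∀ j : Fin N,
      ((Finset.univ.filter fun π : Equiv.Perm (Fin N) => π i = j).card) * N
        = N.factorial := by
    intro j
    have h1 : ∑ j' : Fin N,
        (Finset.univ.filter fun π : Equiv.Perm (Fin N) => π i = j').card
        = (Finset.univ : Finset (Equiv.Perm (Fin N))).card :=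
      (Finset.card_eq_sum_card_fiberwise (fun π _ => Finset.mem_univ _)).symm
    have h2 : ∑ j' : Fin N,
        (Finset.univ.filter fun π : Equiv.Perm (Fin N) => π i = j').card
        = ∑ _j' : Fin N,
          (Finset.univ.filter fun π : Equiv.Perm (Fin N) => π i = j).card :=
      Finset.sum_congr rfl (fun j' _ => card_fiber_one i j' j)
    rw [h2, Finset.sum_const, Finset.card_univ, Fintype.card_fin, smul_eq_mul] at h1
    rw [mul_comm]
    rw [h1, Finset.card_univ, Fintype.card_perm, Fintype.card_fin]
  have hsum : ∑ π : Equiv.Perm (Fin N), g (π i)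
      = ∑ j : Fin N, ∑ π ∈ Finset.univ.filter
          (fun π : Equiv.Perm (Fin N) => π i = j), g (π i) :=
    (Finset.sum_fiberwise_of_maps_to (fun π _ => Finset.mem_univ _) _).symm
  rw [hsum]
  rw [Finset.mul_sum]
  refine Finset.sum_congr rfl (fun j _ => ?_)
  have : ∑ π ∈ Finset.univ.filter
      (fun π : Equiv.Perm (Fin N) => π i = j), g (π i)
      = ∑ _π ∈ Finset.univ.filter
      (fun π : Equiv.Perm (Fin N) => π i = j), g j := by
    refine Finset.sum_congr rfl (fun π hπ => ?_)
    simp only [Finset.mem_filter] at hπ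
    rw [hπ.2]
  rw [this, Finset.sum_const, nsmul_eq_mul]
  have hN0 : (N : ℝ) ≠ 0 := Nat.cast_ne_zero.mpr hNpos.ne'
  have hcR : ((Finset.univ.filter
      (fun π : Equiv.Perm (Fin N) => π i = j)).card : ℝ) = (N.factorial : ℝ) / N := by
    rw [eq_div_iff hN0]
    exact_mod_cast congrArg (Nat.cast (R := ℝ)) (hcard j)
  rw [hcR]

lemma exists_perm_two {N : ℕ} {j j' a b : Fin N} (h1 : j ≠ j') (h2 : a ≠ b) :
    ∃ ρ : Equiv.Perm (Fin N), ρ j = a ∧ ρ j' = b := by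
  refine ⟨Equiv.swap (Equiv.swap j a j') b * Equiv.swap j a, ?_, ?_⟩
  · have hne1 : Equiv.swap j a j' ≠ a := by
      intro h
      apply h1
      have := congrArg (Equiv.swap j a) h
      simpa using this.symm
    simp only [Equiv.Perm.mul_apply, Equiv.swap_apply_left]
    exact Equiv.swap_apply_of_ne_of_ne (Ne.symm hne1) h2
  · simp only [Equiv.Perm.mul_apply]
    exact Equiv.swap_apply_left _ _

lemma card_fiber_two {N : ℕ} {i k : Fin N} {j j' a b : Fin N}
    (h1 : j ≠ j') (h2 : a ≠ b) :
    (Finset.univ.filter fun π : Equiv.Perm (Fin N) => π i = j ∧ π k = j').card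
      = (Finset.univ.filter fun π : Equiv.Perm (Fin N) => π i = a ∧ π k = b).card := by
  obtain ⟨ρ, hρ1, hρ2⟩ := exists_perm_two h1 h2
  apply Finset.card_bij' (fun π _ => ρ * π) (fun π _ => ρ⁻¹ * π)
  · intro π hπ
    simp only [Finset.mem_filter, Finset.mem_univ, true_and] at hπ ⊢
    simp [hπ.1, hπ.2, hρ1, hρ2]
  · intro π hπ
    simp only [Finset.mem_filter, Finset.mem_univ, true_and] at hπ ⊢
    constructor
    · simp [← hρ1, hπ.1]
    · simp [← hρ2, hπ.2]
  · intro π _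
    rw [← mul_assoc, inv_mul_cancel, one_mul]
  · intro π _
    rw [← mul_assoc, mul_inv_cancel, one_mul]

lemma sum_perm_two {N : ℕ} {i k : Fin N} (hik : i ≠ k) (g : Fin N → Fin N → ℝ) :
    ∑ π : Equiv.Perm (Fin N), g (π i) (π k)
      = (N.factorial : ℝ) / ((N : ℝ) * ((N : ℝ) - 1)) *
          ∑ p ∈ (Finset.univ : Finset (Fin N)).offDiag, g p.1 p.2 := by
  have hN2 : 2 ≤ N := by
    by_contra hlt
    push_neg at hlt
    interval_cases N
    · exact i.elim0
    · exact hik (Subsingleton.elim i k)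
  have hN0 : (N : ℝ) ≠ 0 := by positivity
  have hN1 : (N : ℝ) - 1 ≠ 0 := by
    have : (2 : ℝ) ≤ N := by exact_mod_cast hN2
    linarith
  set fib : Fin N × Fin N → Finset (Equiv.Perm (Fin N)) :=
    fun p => Finset.univ.filter fun π => π i = p.1 ∧ π k = p.2 with hfib
  have hfib_empty : ∀ p : Fin N × Fin N, p.1 = p.2 → fib p = ∅ := by
    intro p hp
    rw [Finset.eq_empty_iff_forall_notMem]
    intro π hπ
    simp only [hfib, Finset.mem_filter, Finset.mem_univ, true_and] at hπ
    exact hik (π.injective (by rw [hπ.1, hπ.2, hp]))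
  have hcard_eq : ∀ p ∈ (Finset.univ : Finset (Fin N)).offDiag,
      (fib p).card = (fib (i, k)).card := by
    intro p hp
    rw [Finset.mem_offDiag] at hp
    exact card_fiber_two hp.2.2 hik
  have htot : ((Finset.univ : Finset (Fin N)).offDiag.card) * (fib (i, k)).card
      = N.factorial := by
    have h1 : ∑ p : Fin N × Fin N, (fib p).card
        = (Finset.univ : Finset (Equiv.Perm (Fin N))).card := by
      rw [Finset.card_eq_sum_card_fiberwise
        (f := fun π : Equiv.Perm (Fin N) => (π i, π k))
        (t := (Finset.univ : Finset (Fin N × Fin N))) (fun π _ => Finset.mem_univ _)]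
      refine Finset.sum_congr rfl (fun p _ => ?_)
      congr 1
      ext π
      simp [hfib, Prod.ext_iff]
    have h2 : ∑ p : Fin N × Fin N, (fib p).card
        = ∑ p ∈ (Finset.univ : Finset (Fin N)).offDiag, (fib p).card := by
      symm
      apply Finset.sum_subset (Finset.subset_univ _)
      intro p _ hp
      have hpd : p.1 = p.2 := by
        by_contra hne
        exact hp (Finset.mem_offDiag.mpr ⟨Finset.mem_univ _, Finset.mem_univ _, hne⟩)
      rw [hfib_empty p hpd, Finset.card_empty]
    have h3 : ∑ p ∈ (Finset.univ : Finset (Fin N)).offDiag, (fib p).card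
        = (Finset.univ : Finset (Fin N)).offDiag.card * (fib (i, k)).card := by
      rw [Finset.sum_congr rfl hcard_eq, Finset.sum_const, smul_eq_mul]
    rw [← h3, ← h2, h1, Finset.card_univ, Fintype.card_perm, Fintype.card_fin]
  have hoffcard : (((Finset.univ : Finset (Fin N)).offDiag.card : ℝ))
      = (N : ℝ) * ((N : ℝ) - 1) := by
    rw [Finset.offDiag_card, Finset.card_univ, Fintype.card_fin]
    have hle : N ≤ N * N := Nat.le_mul_of_pos_left N (by omega)
    push_cast [Nat.cast_sub hle]
    ring
  have hcR : ((fib (i, k)).card : ℝ)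
      = (N.factorial : ℝ) / ((N : ℝ) * ((N : ℝ) - 1)) := by
    rw [eq_div_iff (by exact mul_ne_zero hN0 hN1)]
    rw [← hoffcard]
    rw [mul_comm]
    exact_mod_cast congrArg (Nat.cast (R := ℝ)) htot
  have hsum : ∑ π : Equiv.Perm (Fin N), g (π i) (π k)
      = ∑ p : Fin N × Fin N, ∑ π ∈ Finset.univ.filter
          (fun π : Equiv.Perm (Fin N) => (π i, π k) = p), g (π i) (π k) :=
    (Finset.sum_fiberwise_of_maps_to (fun π _ => Finset.mem_univ _) _).symm
  have hinner : ∀ p : Fin N × Fin N,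
      ∑ π ∈ Finset.univ.filter
          (fun π : Equiv.Perm (Fin N) => (π i, π k) = p), g (π i) (π k)
        = ((fib p).card : ℝ) * g p.1 p.2 := by
    intro p
    have hfilter : Finset.univ.filter
        (fun π : Equiv.Perm (Fin N) => (π i, π k) = p) = fib p := by
      ext π
      simp [hfib, Prod.ext_iff]
    rw [hfilter]
    have : ∑ π ∈ fib p, g (π i) (π k) = ∑ _π ∈ fib p, g p.1 p.2 := by
      refine Finset.sum_congr rfl (fun π hπ => ?_)
      simp only [hfib, Finset.mem_filter] at hπ
      rw [hπ.2.1, hπ.2.2]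
    rw [this, Finset.sum_const, nsmul_eq_mul]
  rw [hsum]
  simp only [hinner]
  have hzero : ∀ p ∈ (Finset.univ : Finset (Fin N × Fin N)),
      p ∉ (Finset.univ : Finset (Fin N)).offDiag →
        ((fib p).card : ℝ) * g p.1 p.2 = 0 := by
    intro p _ hp
    have hpd : p.1 = p.2 := by
      by_contra hne
      exact hp (Finset.mem_offDiag.mpr ⟨Finset.mem_univ _, Finset.mem_univ _, hne⟩)
    rw [hfib_empty p hpd]
    simp
  rw [← Finset.sum_subset (Finset.subset_univ _) hzero]
  rw [Finset.mul_sum]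
  refine Finset.sum_congr rfl (fun p hp => ?_)
  rw [hcard_eq p hp, hcR]

lemma offDiag_sum_eq {α : Type*} [Fintype α] [DecidableEq α] (f : α → α → ℝ) :
    ∑ p ∈ (Finset.univ : Finset α).offDiag, f p.1 p.2
      = (∑ i, ∑ k, f i k) - ∑ i, f i i := by
  have h := Finset.sum_union (f := fun p : α × α => f p.1 p.2)
    (Finset.disjoint_diag_offDiag (Finset.univ : Finset α))
  rw [Finset.diag_union_offDiag] at h
  have hprod : ∑ p ∈ (Finset.univ : Finset α) ×ˢ Finset.univ, f p.1 p.2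
      = ∑ i, ∑ k, f i k := Finset.sum_product _ _ _
  have hdiag : ∑ p ∈ (Finset.univ : Finset α).diag, f p.1 p.2 = ∑ i, f i i :=
    Finset.sum_diag _ _
  rw [hprod, hdiag] at h
  linarith

lemma sum_comm4 {α β γ δ : Type*} [Fintype α] [Fintype β] [Fintype γ] [Fintype δ]
    (F : α → β → γ → δ → ℝ) :
    ∑ a, ∑ b, ∑ c, ∑ d, F a b c d = ∑ c, ∑ d, ∑ a, ∑ b, F a b c d := by
  calc ∑ a, ∑ b, ∑ c, ∑ d, F a b c d
      = ∑ a, ∑ c, ∑ b, ∑ d, F a b c d :=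
        Finset.sum_congr rfl fun a _ => Finset.sum_comm
    _ = ∑ c, ∑ a, ∑ b, ∑ d, F a b c d := Finset.sum_comm
    _ = ∑ c, ∑ a, ∑ d, ∑ b, F a b c d :=
        Finset.sum_congr rfl fun c _ => Finset.sum_congr rfl fun a _ => Finset.sum_comm
    _ = ∑ c, ∑ d, ∑ a, ∑ b, F a b c d :=
        Finset.sum_congr rfl fun c _ => Finset.sum_comm

lemma lamMin_pos_and_le {H : ℕ} (hH : 1 ≤ H) (V : Matrix (Fin H) (Fin H) ℝ)
    (hpd : V.PosDef) :
    0 < lamMin V ∧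
      ∀ x : Fin H → ℝ, (∑ i, x i ^ 2) = 1 → lamMin V ≤ x ⬝ᵥ V.mulVec x := by
  haveI : Nonempty (Fin H) := ⟨⟨0, hH⟩⟩
  set K : Set (Fin H → ℝ) := {x | ∑ i, x i ^ 2 = 1} with hK
  have hcont : Continuous fun x : Fin H → ℝ => ∑ i, x i ^ 2 :=
    continuous_finset_sum _ fun i _ => (continuous_apply i).pow 2
  have hclosed : IsClosed K := isClosed_eq hcont continuous_const
  have hbdd : Bornology.IsBounded K := by
    rw [isBounded_iff_forall_norm_le]
    refine ⟨1, fun x hx => ?_⟩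
    rw [pi_norm_le_iff_of_nonneg zero_le_one]
    intro i
    rw [Real.norm_eq_abs]
    have h1 : x i ^ 2 ≤ 1 := by
      have := Finset.single_le_sum (f := fun j => x j ^ 2)
        (fun j _ => sq_nonneg _) (Finset.mem_univ i)
      calc x i ^ 2 ≤ ∑ j, x j ^ 2 := this
        _ = 1 := hx
    nlinarith [abs_nonneg (x i), sq_abs (x i)]
  have hcompact : IsCompact K := Metric.isCompact_of_isClosed_isBounded hclosed hbdd
  have hne : K.Nonempty := by
    refine ⟨Pi.single (⟨0, hH⟩ : Fin H) 1, ?_⟩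
    simp [hK, Pi.single_apply]
  have hfc : Continuous fun x : Fin H → ℝ => x ⬝ᵥ V.mulVec x := by
    simp only [dotProduct, mulVec]
    apply continuous_finset_sum
    intro i _
    exact (continuous_apply i).mul
      (continuous_finset_sum _ fun j _ => continuous_const.mul (continuous_apply j))
  obtain ⟨x₀, hx₀K, hx₀min⟩ := hcompact.exists_isMinOn hne hfc.continuousOn
  have hx₀min' : ∀ y ∈ K, x₀ ⬝ᵥ V.mulVec x₀ ≤ y ⬝ᵥ V.mulVec y := isMinOn_iff.mp hx₀min
  have hx₀ne : x₀ ≠ 0 := by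
    intro h
    rw [h] at hx₀K
    simp [hK] at hx₀K
  have hm : 0 < x₀ ⬝ᵥ V.mulVec x₀ := by
    have := hpd.re_dotProduct_pos hx₀ne
    simpa using this
  haveI : Nonempty {x : Fin H → ℝ // (∑ i, x i ^ 2) = 1} := ⟨⟨x₀, hx₀K⟩⟩
  have hbddB : BddBelow (Set.range
      fun y : {x : Fin H → ℝ // (∑ i, x i ^ 2) = 1} => y.1 ⬝ᵥ V.mulVec y.1) := by
    refine ⟨x₀ ⬝ᵥ V.mulVec x₀, ?_⟩
    rintro v ⟨y, rfl⟩
    exact hx₀min' y.1 y.2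
  constructor
  · have hle : x₀ ⬝ᵥ V.mulVec x₀ ≤ lamMin V :=
      le_ciInf fun y => hx₀min' y.1 y.2
    linarith
  · intro x hx
    exact ciInf_le hbddB ⟨x, hx⟩

/-- Reformulation of multivariate linear permutational statistics in standardized,
orthogonal form. -/
theorem stmt1 (N H : ℕ) (hN : 2 ≤ N) (hH : 1 ≤ H)
    (M M' M'' : Fin H → Matrix (Fin N) (Fin N) ℝ)
    (V : Matrix (Fin H) (Fin H) ℝ)
    (hV : ∀ h l, V h l =
      pexp (fun π => (∑ i, M h i (π i)) * (∑ i, M l i (π i)))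
        - pexp (fun π => ∑ i, M h i (π i)) * pexp (fun π => ∑ i, M l i (π i)))
    (hpd : V.PosDef)
    (hM' : ∀ h i j, M' h i j =
      M h i j - (N : ℝ)⁻¹ * (∑ j', M h i j') - (N : ℝ)⁻¹ * (∑ i', M h i' j)
        + ((N : ℝ) ^ 2)⁻¹ * (∑ i', ∑ j', M h i' j'))
    (hM'' : ∀ h i j, M'' h i j = ∑ l, (CFC.sqrt V)⁻¹ h l * M' l i j) :
    ((∀ h i, (∑ j, M'' h i j) = 0) ∧
     (∀ h j, (∑ i, M'' h i j) = 0) ∧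
     (∀ h, Matrix.trace ((M'' h)ᵀ * M'' h) = (N : ℝ) - 1) ∧
     (∀ h l, h ≠ l → Matrix.trace ((M'' h)ᵀ * M'' l) = 0) ∧
     (∀ π : Equiv.Perm (Fin N), ∀ h : Fin H,
       ((CFC.sqrt V)⁻¹).mulVec
           (fun l => (∑ i, M l i (π i)) - pexp (fun π' => ∑ i, M l i (π' i))) h
         = ∑ i, M'' h i (π i))) ∧
    (∀ h i j, |M'' h i j| ≤
      (Real.sqrt (lamMin V))⁻¹ * Real.sqrt (H : ℝ) *
        ⨆ l : Fin H, ⨆ i' : Fin N, ⨆ j' : Fin N, |M' l i' j'|) := by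
  have hNR : (2 : ℝ) ≤ (N : ℝ) := by exact_mod_cast hN
  have hN0 : (N : ℝ) ≠ 0 := by linarith
  have hN1 : (N : ℝ) - 1 ≠ 0 := by linarith
  have hfac0 : (N.factorial : ℝ) ≠ 0 := Nat.cast_ne_zero.mpr N.factorial_ne_zero
  set W := CFC.sqrt V with hWdef
  set Vi := W⁻¹ with hVidef
  have hWW : W * W = V := CFC.sqrt_mul_sqrt_self V hpd.posSemidef.nonneg
  have hdet : IsUnit W.det := by
    have hVdet : V.det ≠ 0 := ne_of_gt hpd.det_pos
    rw [← hWW, Matrix.det_mul] at hVdet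
    exact isUnit_iff_ne_zero.mpr (left_ne_zero_of_mul hVdet)
  have hViW : Vi * W = 1 := Matrix.nonsing_inv_mul W hdet
  have hWVi : W * Vi = 1 := Matrix.mul_nonsing_inv W hdet
  have hViVVi : Vi * V * Vi = 1 := by
    rw [← hWW]
    have hassoc : Vi * (W * W) * Vi = (Vi * W) * (W * Vi) := by
      noncomm_ring
    rw [hassoc, hViW, hWVi, one_mul]
  have hWsym : Wᵀ = W := by
    have h : Wᴴ = W := (Matrix.nonneg_iff_posSemidef.mp (CFC.sqrt_nonneg V)).isHermitian
    rwa [Matrix.conjTranspose_eq_transpose_of_trivial] at h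
  have hVisym : ∀ x y, Vi x y = Vi y x := by
    intro x y
    have h : Viᵀ = Vi := by
      rw [hVidef, Matrix.transpose_nonsing_inv, hWsym]
    calc Vi x y = Viᵀ y x := rfl
      _ = Vi y x := by rw [h]
  -- row sums of M' vanish
  have rowM' : ∀ h i, ∑ j, M' h i j = 0 := by
    intro h i
    have e0 : ∑ j, M' h i j
        = ∑ j, (M h i j - (N : ℝ)⁻¹ * (∑ j', M h i j')
            - (N : ℝ)⁻¹ * (∑ i', M h i' j)
            + ((N : ℝ) ^ 2)⁻¹ * (∑ i', ∑ j', M h i' j')) :=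
      Finset.sum_congr rfl fun j _ => hM' h i j
    rw [e0]
    rw [Finset.sum_add_distrib, Finset.sum_sub_distrib, Finset.sum_sub_distrib]
    have e1 : ∑ _j : Fin N, (N : ℝ)⁻¹ * (∑ j', M h i j')
        = (N : ℝ)⁻¹ * ((N : ℝ) * ∑ j', M h i j') := by
      rw [Finset.sum_const, Finset.card_univ, Fintype.card_fin, nsmul_eq_mul]
      ring
    have e2 : ∑ j : Fin N, (N : ℝ)⁻¹ * (∑ i', M h i' j)
        = (N : ℝ)⁻¹ * (∑ i', ∑ j', M h i' j') := by
      rw [← Finset.mul_sum, Finset.sum_comm]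
    have e3 : ∑ _j : Fin N, ((N : ℝ) ^ 2)⁻¹ * (∑ i', ∑ j', M h i' j')
        = ((N : ℝ) ^ 2)⁻¹ * ((N : ℝ) * ∑ i', ∑ j', M h i' j') := by
      rw [Finset.sum_const, Finset.card_univ, Fintype.card_fin, nsmul_eq_mul]
      ring
    rw [e1, e2, e3]
    field_simp
    ring
  -- column sums of M' vanish
  have colM' : ∀ h j, ∑ i, M' h i j = 0 := by
    intro h j
    have e0 : ∑ i, M' h i j
        = ∑ i, (M h i j - (N : ℝ)⁻¹ * (∑ j', M h i j')
            - (N : ℝ)⁻¹ * (∑ i', M h i' j)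
            + ((N : ℝ) ^ 2)⁻¹ * (∑ i', ∑ j', M h i' j')) :=
      Finset.sum_congr rfl fun i _ => hM' h i j
    rw [e0]
    rw [Finset.sum_add_distrib, Finset.sum_sub_distrib, Finset.sum_sub_distrib]
    have e1 : ∑ i : Fin N, (N : ℝ)⁻¹ * (∑ j', M h i j')
        = (N : ℝ)⁻¹ * (∑ i', ∑ j', M h i' j') := by
      rw [← Finset.mul_sum]
    have e2 : ∑ _i : Fin N, (N : ℝ)⁻¹ * (∑ i', M h i' j)
        = (N : ℝ)⁻¹ * ((N : ℝ) * ∑ i', M h i' j) := by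
      rw [Finset.sum_const, Finset.card_univ, Fintype.card_fin, nsmul_eq_mul]
      ring
    have e3 : ∑ _i : Fin N, ((N : ℝ) ^ 2)⁻¹ * (∑ i', ∑ j', M h i' j')
        = ((N : ℝ) ^ 2)⁻¹ * ((N : ℝ) * ∑ i', ∑ j', M h i' j') := by
      rw [Finset.sum_const, Finset.card_univ, Fintype.card_fin, nsmul_eq_mul]
      ring
    rw [e1, e2, e3]
    field_simp
    ring
  -- centered permutation statistics
  have sumM'π : ∀ h (π : Equiv.Perm (Fin N)),
      ∑ i, M' h i (π i)
        = (∑ i, M h i (π i)) - (N : ℝ)⁻¹ * ∑ i, ∑ j, M h i j := by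
    intro h π
    have e0 : ∑ i, M' h i (π i)
        = ∑ i, (M h i (π i) - (N : ℝ)⁻¹ * (∑ j', M h i j')
            - (N : ℝ)⁻¹ * (∑ i', M h i' (π i))
            + ((N : ℝ) ^ 2)⁻¹ * (∑ i', ∑ j', M h i' j')) :=
      Finset.sum_congr rfl fun i _ => hM' h i (π i)
    rw [e0]
    rw [Finset.sum_add_distrib, Finset.sum_sub_distrib, Finset.sum_sub_distrib]
    have e1 : ∑ i : Fin N, (N : ℝ)⁻¹ * (∑ j', M h i j')
        = (N : ℝ)⁻¹ * (∑ i', ∑ j', M h i' j') := by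
      rw [← Finset.mul_sum]
    have e2 : ∑ i : Fin N, (N : ℝ)⁻¹ * (∑ i', M h i' (π i))
        = (N : ℝ)⁻¹ * (∑ i', ∑ j', M h i' j') := by
      rw [← Finset.mul_sum]
      congr 1
      calc ∑ i, ∑ i', M h i' (π i) = ∑ i', ∑ i, M h i' (π i) := Finset.sum_comm
        _ = ∑ i', ∑ j, M h i' j :=
          Finset.sum_congr rfl fun i' _ => Equiv.sum_comp π (M h i')
    have e3 : ∑ _i : Fin N, ((N : ℝ) ^ 2)⁻¹ * (∑ i', ∑ j', M h i' j')
        = ((N : ℝ) ^ 2)⁻¹ * ((N : ℝ) * ∑ i', ∑ j', M h i' j') := by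
      rw [Finset.sum_const, Finset.card_univ, Fintype.card_fin, nsmul_eq_mul]
      ring
    rw [e1, e2, e3]
    field_simp
    ring
  -- first moment
  have pexp1 : ∀ h, pexp (fun π : Equiv.Perm (Fin N) => ∑ i, M h i (π i))
      = (N : ℝ)⁻¹ * ∑ i, ∑ j, M h i j := by
    intro h
    simp only [pexp]
    rw [Finset.sum_comm]
    rw [Finset.sum_congr rfl fun i _ => sum_perm_one i (fun j => M h i j)]
    rw [← Finset.mul_sum]
    field_simp
  -- second moment
  have pexp2 : ∀ a b,
      pexp (fun π : Equiv.Perm (Fin N) =>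
          (∑ i, M a i (π i)) * (∑ i, M b i (π i)))
        = (N : ℝ)⁻¹ * (∑ i, ∑ j, M a i j * M b i j)
          + ((N : ℝ) * ((N : ℝ) - 1))⁻¹ *
            ((∑ i, ∑ j, M a i j) * (∑ i, ∑ j, M b i j)
              - (∑ i, (∑ j, M a i j) * (∑ j, M b i j))
              - (∑ j, (∑ i, M a i j) * (∑ i, M b i j))
              + (∑ i, ∑ j, M a i j * M b i j)) := by
    intro a b
    have hstepB : ∀ i : Fin N,
        ∑ k, ∑ π : Equiv.Perm (Fin N), M a i (π i) * M b k (π k)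
          = (N.factorial : ℝ) / N * (∑ j, M a i j * M b i j)
            + (N.factorial : ℝ) / ((N : ℝ) * ((N : ℝ) - 1)) *
              ((∑ k, ((∑ j, M a i j) * (∑ j, M b k j) - ∑ j, M a i j * M b k j))
                - ((∑ j, M a i j) * (∑ j, M b i j) - ∑ j, M a i j * M b i j)) := by
      intro i
      rw [← Finset.add_sum_erase _ _ (Finset.mem_univ i)]
      congr 1
      · exact sum_perm_one i fun j => M a i j * M b i j
      · have hin : ∀ k ∈ Finset.univ.erase i,
            ∑ π : Equiv.Perm (Fin N), M a i (π i) * M b k (π k)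
              = (N.factorial : ℝ) / ((N : ℝ) * ((N : ℝ) - 1)) *
                ((∑ j, M a i j) * (∑ j, M b k j) - ∑ j, M a i j * M b k j) := by
          intro k hk
          have hik : i ≠ k := (Finset.ne_of_mem_erase hk).symm
          rw [sum_perm_two hik (fun j j' => M a i j * M b k j')]
          congr 1
          calc ∑ p ∈ (Finset.univ : Finset (Fin N)).offDiag, M a i p.1 * M b k p.2
              = (∑ x, ∑ y, M a i x * M b k y) - ∑ x, M a i x * M b k x :=
                offDiag_sum_eq (fun x y => M a i x * M b k y)
            _ = (∑ j, M a i j) * (∑ j, M b k j) - ∑ j, M a i j * M b k j := by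
                rw [Finset.sum_mul_sum]
        rw [Finset.sum_congr rfl hin, ← Finset.mul_sum,
          Finset.sum_erase_eq_sub (Finset.mem_univ i)]
    have hnum : ∑ π : Equiv.Perm (Fin N),
        (∑ i, M a i (π i)) * (∑ i, M b i (π i))
        = (N.factorial : ℝ) / N * (∑ i, ∑ j, M a i j * M b i j)
          + (N.factorial : ℝ) / ((N : ℝ) * ((N : ℝ) - 1)) *
            ((∑ i, ∑ j, M a i j) * (∑ i, ∑ j, M b i j)
              - (∑ i, (∑ j, M a i j) * (∑ j, M b i j))
              - (∑ j, (∑ i, M a i j) * (∑ i, M b i j))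
              + (∑ i, ∑ j, M a i j * M b i j)) := by
      have hA : ∑ π : Equiv.Perm (Fin N), (∑ i, M a i (π i)) * (∑ i, M b i (π i))
          = ∑ i, ∑ k, ∑ π : Equiv.Perm (Fin N), M a i (π i) * M b k (π k) := by
        calc ∑ π : Equiv.Perm (Fin N), (∑ i, M a i (π i)) * (∑ i, M b i (π i))
            = ∑ π : Equiv.Perm (Fin N), ∑ i, ∑ k, M a i (π i) * M b k (π k) :=
              Finset.sum_congr rfl fun π _ => Finset.sum_mul_sum _ _ _ _
          _ = ∑ i, ∑ π : Equiv.Perm (Fin N), ∑ k, M a i (π i) * M b k (π k) :=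
              Finset.sum_comm
          _ = ∑ i, ∑ k, ∑ π : Equiv.Perm (Fin N), M a i (π i) * M b k (π k) :=
              Finset.sum_congr rfl fun i _ => Finset.sum_comm
      rw [hA, Finset.sum_congr rfl fun i _ => hstepB i]
      rw [Finset.sum_add_distrib, ← Finset.mul_sum, ← Finset.mul_sum]
      congr 1
      congr 1
      have hs1 : ∑ i : Fin N, ∑ k : Fin N, (∑ j, M a i j) * (∑ j, M b k j)
          = (∑ i, ∑ j, M a i j) * (∑ i, ∑ j, M b i j) :=
        (Finset.sum_mul_sum _ _ _ _).symm
      have hs2 : ∑ i : Fin N, ∑ k : Fin N, (∑ j, M a i j * M b k j)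
          = ∑ j, (∑ i, M a i j) * (∑ i, M b i j) := by
        calc ∑ i : Fin N, ∑ k : Fin N, (∑ j, M a i j * M b k j)
            = ∑ i : Fin N, ∑ j, ∑ k : Fin N, M a i j * M b k j :=
              Finset.sum_congr rfl fun i _ => Finset.sum_comm
          _ = ∑ i : Fin N, ∑ j, M a i j * (∑ k, M b k j) :=
              Finset.sum_congr rfl fun i _ => Finset.sum_congr rfl fun j _ =>
                (Finset.mul_sum _ _ _).symm
          _ = ∑ j, ∑ i, M a i j * (∑ k, M b k j) := Finset.sum_comm
          _ = ∑ j, (∑ i, M a i j) * (∑ i, M b i j) :=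
              Finset.sum_congr rfl fun j _ => (Finset.sum_mul _ _ _).symm
      simp only [Finset.sum_sub_distrib]
      rw [hs1, hs2]
      ring
    simp only [pexp]
    rw [hnum]
    field_simp
  -- the key inner-product identity
  have keyM' : ∀ a b, ∑ i, ∑ j, M' a i j * M' b i j = ((N : ℝ) - 1) * V a b := by
    intro a b
    -- step 1: replace second factor by M
    have step1 : ∑ i, ∑ j, M' a i j * M' b i j = ∑ i, ∑ j, M' a i j * M b i j := by
      have e1 : ∀ i j, M' a i j * M' b i j
          = M' a i j * M b i j - (N : ℝ)⁻¹ * ((∑ j', M b i j') * M' a i j)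
            - (N : ℝ)⁻¹ * ((∑ i', M b i' j) * M' a i j)
            + ((N : ℝ) ^ 2)⁻¹ * ((∑ i', ∑ j', M b i' j') * M' a i j) := by
        intro i j
        rw [hM' b i j]
        ring
      simp only [e1]
      simp only [Finset.sum_add_distrib, Finset.sum_sub_distrib]
      have hx : ∑ i, ∑ j, (N : ℝ)⁻¹ * ((∑ j', M b i j') * M' a i j) = 0 := by
        refine Finset.sum_eq_zero fun i _ => ?_
        rw [← Finset.mul_sum, ← Finset.mul_sum, rowM' a i, mul_zero, mul_zero]
      have hy : ∑ i, ∑ j, (N : ℝ)⁻¹ * ((∑ i', M b i' j) * M' a i j) = 0 := by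
        rw [Finset.sum_comm]
        refine Finset.sum_eq_zero fun j _ => ?_
        rw [← Finset.mul_sum, ← Finset.mul_sum, colM' a j, mul_zero, mul_zero]
      have hz : ∑ i, ∑ j, ((N : ℝ) ^ 2)⁻¹ * ((∑ i', ∑ j', M b i' j') * M' a i j)
          = 0 := by
        refine Finset.sum_eq_zero fun i _ => ?_
        rw [← Finset.mul_sum, ← Finset.mul_sum, rowM' a i, mul_zero, mul_zero]
      rw [hx, hy, hz]
      ring
    -- step 2: expand the first factor
    have step2 : ∑ i, ∑ j, M' a i j * M b i j
        = (∑ i, ∑ j, M a i j * M b i j)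
          - (N : ℝ)⁻¹ * (∑ i, (∑ j, M a i j) * (∑ j, M b i j))
          - (N : ℝ)⁻¹ * (∑ j, (∑ i, M a i j) * (∑ i, M b i j))
          + ((N : ℝ) ^ 2)⁻¹ * ((∑ i, ∑ j, M a i j) * (∑ i, ∑ j, M b i j)) := by
      have e1 : ∀ i j, M' a i j * M b i j
          = M a i j * M b i j - (N : ℝ)⁻¹ * ((∑ j', M a i j') * M b i j)
            - (N : ℝ)⁻¹ * ((∑ i', M a i' j) * M b i j)
            + ((N : ℝ) ^ 2)⁻¹ * ((∑ i', ∑ j', M a i' j') * M b i j) := by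
        intro i j
        rw [hM' a i j]
        ring
      simp only [e1]
      simp only [Finset.sum_add_distrib, Finset.sum_sub_distrib]
      have hx : ∑ i, ∑ j, (N : ℝ)⁻¹ * ((∑ j', M a i j') * M b i j)
          = (N : ℝ)⁻¹ * (∑ i, (∑ j, M a i j) * (∑ j, M b i j)) := by
        simp only [Finset.mul_sum]
      have hy : ∑ i, ∑ j, (N : ℝ)⁻¹ * ((∑ i', M a i' j) * M b i j)
          = (N : ℝ)⁻¹ * (∑ j, (∑ i, M a i j) * (∑ i, M b i j)) := by
        rw [Finset.sum_comm]
        simp only [Finset.mul_sum]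
      have hz : ∑ i, ∑ j, ((N : ℝ) ^ 2)⁻¹ * ((∑ i', ∑ j', M a i' j') * M b i j)
          = ((N : ℝ) ^ 2)⁻¹ * ((∑ i, ∑ j, M a i j) * (∑ i, ∑ j, M b i j)) := by
        simp only [Finset.mul_sum]
      rw [hx, hy, hz]
    rw [step1, step2, hV a b, pexp2 a b, pexp1 a, pexp1 b]
    field_simp
    ring
  -- trace identity
  have traceEq : ∀ h l, Matrix.trace ((M'' h)ᵀ * M'' l)
      = ((N : ℝ) - 1) * (1 : Matrix (Fin H) (Fin H) ℝ) h l := by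
    intro h l
    have htr : Matrix.trace ((M'' h)ᵀ * M'' l)
        = ∑ j, ∑ i, M'' h i j * M'' l i j := by
      simp [Matrix.trace, Matrix.diag, Matrix.mul_apply, Matrix.transpose_apply]
    rw [htr]
    have hentry : ∀ i j : Fin N, M'' h i j * M'' l i j
        = ∑ a, ∑ b, (Vi h a * Vi l b) * (M' a i j * M' b i j) := by
      intro i j
      rw [hM'' h i j, hM'' l i j, Finset.sum_mul_sum]
      exact Finset.sum_congr rfl fun a _ => Finset.sum_congr rfl fun b _ => by ring
    simp only [hentry]
    rw [sum_comm4]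
    have hinner : ∀ a b : Fin H,
        ∑ j : Fin N, ∑ i : Fin N, (Vi h a * Vi l b) * (M' a i j * M' b i j)
          = (Vi h a * Vi l b) * (((N : ℝ) - 1) * V a b) := by
      intro a b
      simp only [← Finset.mul_sum]
      rw [Finset.sum_comm, keyM' a b]
    simp only [hinner]
    have hone : (1 : Matrix (Fin H) (Fin H) ℝ) h l
        = ∑ a, ∑ b, Vi h a * V a b * Vi l b := by
      rw [← hViVVi]
      calc (Vi * V * Vi) h l
          = ∑ c, (∑ a, Vi h a * V a c) * Vi c l := by
            rw [Matrix.mul_apply]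
            exact Finset.sum_congr rfl fun c _ => by rw [Matrix.mul_apply]
        _ = ∑ c, ∑ a, Vi h a * V a c * Vi c l :=
            Finset.sum_congr rfl fun c _ => Finset.sum_mul _ _ _
        _ = ∑ a, ∑ c, Vi h a * V a c * Vi c l := Finset.sum_comm
        _ = ∑ a, ∑ b, Vi h a * V a b * Vi l b :=
            Finset.sum_congr rfl fun a _ => Finset.sum_congr rfl fun b _ => by
              rw [hVisym b l]
    rw [hone]
    rw [Finset.mul_sum]
    refine Finset.sum_congr rfl fun a _ => ?_
    rw [Finset.mul_sum]
    refine Finset.sum_congr rfl fun b _ => ?_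
    ring
  refine ⟨⟨?_, ?_, ?_, ?_, ?_⟩, ?_⟩
  · -- row sums of M'' vanish
    intro h i
    have : ∑ j, M'' h i j = ∑ l, Vi h l * ∑ j, M' l i j := by
      rw [Finset.sum_congr rfl fun j _ => hM'' h i j, Finset.sum_comm]
      exact Finset.sum_congr rfl fun l _ => (Finset.mul_sum _ _ _).symm
    rw [this]
    simp only [rowM', mul_zero, Finset.sum_const_zero]
  · -- column sums of M'' vanish
    intro h j
    have : ∑ i, M'' h i j = ∑ l, Vi h l * ∑ i, M' l i j := by
      rw [Finset.sum_congr rfl fun i _ => hM'' h i j, Finset.sum_comm]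
      exact Finset.sum_congr rfl fun l _ => (Finset.mul_sum _ _ _).symm
    rw [this]
    simp only [colM', mul_zero, Finset.sum_const_zero]
  · -- diagonal traces
    intro h
    rw [traceEq h h, Matrix.one_apply_eq, mul_one]
  · -- off-diagonal traces
    intro h l hhl
    rw [traceEq h l, Matrix.one_apply_ne hhl, mul_zero]
  · -- standardization identity
    intro π h
    simp only [Matrix.mulVec, dotProduct]
    calc ∑ l, Vi h l * ((∑ i, M l i (π i))
            - pexp (fun π' : Equiv.Perm (Fin N) => ∑ i, M l i (π' i)))
        = ∑ l, Vi h l * (∑ i, M' l i (π i)) := by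
          refine Finset.sum_congr rfl fun l _ => ?_
          rw [pexp1 l, sumM'π l π]
      _ = ∑ l, ∑ i, Vi h l * M' l i (π i) :=
          Finset.sum_congr rfl fun l _ => Finset.mul_sum _ _ _
      _ = ∑ i, ∑ l, Vi h l * M' l i (π i) := Finset.sum_comm
      _ = ∑ i, M'' h i (π i) :=
          Finset.sum_congr rfl fun i _ => (hM'' h i (π i)).symm
  · -- the bound
    intro h i j
    haveI : Nonempty (Fin H) := ⟨⟨0, hH⟩⟩
    haveI : Nonempty (Fin N) := ⟨⟨0, by omega⟩⟩
    set K := ⨆ l : Fin H, ⨆ i' : Fin N, ⨆ j' : Fin N, |M' l i' j'| with hKdef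
    have hKb : ∀ (l : Fin H) (i' j' : Fin N), |M' l i' j'| ≤ K := by
      intro l i' j'
      have b1 : |M' l i' j'| ≤ ⨆ j'' : Fin N, |M' l i' j''| :=
        le_ciSup (f := fun j'' : Fin N => |M' l i' j''|)
          (Set.Finite.bddAbove (Set.finite_range _)) j'
      have b2 : (⨆ j'' : Fin N, |M' l i' j''|)
          ≤ ⨆ i'' : Fin N, ⨆ j'' : Fin N, |M' l i'' j''| :=
        le_ciSup (f := fun i'' : Fin N => ⨆ j'' : Fin N, |M' l i'' j''|)
          (Set.Finite.bddAbove (Set.finite_range _)) i'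
      have b3 : (⨆ i'' : Fin N, ⨆ j'' : Fin N, |M' l i'' j''|) ≤ K :=
        le_ciSup (f := fun l : Fin H => ⨆ i'' : Fin N, ⨆ j'' : Fin N, |M' l i'' j''|)
          (Set.Finite.bddAbove (Set.finite_range _)) l
      exact b1.trans (b2.trans b3)
    have hK0 : 0 ≤ K :=
      le_trans (abs_nonneg _) (hKb h i j)
    obtain ⟨hlam_pos, hlam_le⟩ := lamMin_pos_and_le hH V hpd
    set t := ∑ l, (Vi h l) ^ 2 with htdef
    have hwVw : (fun l => Vi h l) ⬝ᵥ V.mulVec (fun l => Vi h l) = 1 := by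
      have hexp : (Vi * V * Vi) h h = ∑ a, ∑ c, Vi h a * V a c * Vi h c := by
        calc (Vi * V * Vi) h h
            = ∑ c, (∑ a, Vi h a * V a c) * Vi c h := by
              rw [Matrix.mul_apply]
              exact Finset.sum_congr rfl fun c _ => by rw [Matrix.mul_apply]
          _ = ∑ c, ∑ a, Vi h a * V a c * Vi c h :=
              Finset.sum_congr rfl fun c _ => Finset.sum_mul _ _ _
          _ = ∑ a, ∑ c, Vi h a * V a c * Vi c h := Finset.sum_comm
          _ = ∑ a, ∑ c, Vi h a * V a c * Vi h c :=
              Finset.sum_congr rfl fun a _ => Finset.sum_congr rfl fun c _ => by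
                rw [hVisym c h]
      have h1 : (Vi * V * Vi) h h = 1 := by rw [hViVVi]; exact Matrix.one_apply_eq h
      rw [← h1, hexp]
      simp only [dotProduct, Matrix.mulVec, Finset.mul_sum]
      exact Finset.sum_congr rfl fun a _ => Finset.sum_congr rfl fun c _ => by ring
    have ht_nonneg : 0 ≤ t := Finset.sum_nonneg fun l _ => sq_nonneg _
    have ht_pos : 0 < t := by
      rcases ht_nonneg.lt_or_eq with hlt | heq
      · exact hlt
      · exfalso
        have hall : ∀ l ∈ Finset.univ, (Vi h l) ^ 2 = 0 := by
          intro l hl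
          exact (Finset.sum_eq_zero_iff_of_nonneg
            (fun l _ => sq_nonneg (Vi h l))).mp heq.symm l hl
        have hzero : (fun l => Vi h l) = 0 := by
          funext l
          exact pow_eq_zero_iff (n := 2) (by norm_num) |>.mp (hall l (Finset.mem_univ l))
        rw [hzero] at hwVw
        simp at hwVw
    have hsq : Real.sqrt t ≠ 0 := by positivity
    set x : Fin H → ℝ := fun l => Vi h l / Real.sqrt t with hxdef
    have hx1 : ∑ l, x l ^ 2 = 1 := by
      simp only [hxdef, div_pow, Real.sq_sqrt ht_nonneg]
      rw [← Finset.sum_div, ← htdef]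
      field_simp
    have hxsmul : x = (Real.sqrt t)⁻¹ • (fun l => Vi h l) := by
      funext l
      simp [hxdef, div_eq_inv_mul]
    have hxV : x ⬝ᵥ V.mulVec x = t⁻¹ := by
      rw [hxsmul, Matrix.mulVec_smul, dotProduct_smul, smul_dotProduct, hwVw]
      simp only [smul_eq_mul, mul_one]
      rw [← mul_inv, Real.mul_self_sqrt ht_nonneg]
    have hlam_le' : lamMin V ≤ t⁻¹ := by
      rw [← hxV]
      exact hlam_le x hx1
    have ht_le : t ≤ (lamMin V)⁻¹ := by
      have h2 : lamMin V * t ≤ 1 := by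
        have := mul_le_mul_of_nonneg_right hlam_le' ht_pos.le
        rwa [inv_mul_cancel₀ (ne_of_gt ht_pos)] at this
      rw [← one_div, le_div_iff₀ hlam_pos, mul_comm]
      exact h2
    have habs : |M'' h i j| ≤ (∑ l, |Vi h l|) * K := by
      rw [hM'' h i j]
      calc |∑ l, Vi h l * M' l i j| ≤ ∑ l, |Vi h l * M' l i j| :=
            Finset.abs_sum_le_sum_abs _ _
        _ = ∑ l, |Vi h l| * |M' l i j| := by simp [abs_mul]
        _ ≤ ∑ l, |Vi h l| * K :=
            Finset.sum_le_sum fun l _ =>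
              mul_le_mul_of_nonneg_left (hKb l i j) (abs_nonneg _)
        _ = (∑ l, |Vi h l|) * K := (Finset.sum_mul _ _ _).symm
    have hCS : ∑ l, |Vi h l| ≤ Real.sqrt H * Real.sqrt t := by
      have h1 := Finset.sum_mul_sq_le_sq_mul_sq Finset.univ
        (fun _ : Fin H => (1 : ℝ)) (fun l => |Vi h l|)
      simp only [one_mul, one_pow, Finset.sum_const, Finset.card_univ,
        Fintype.card_fin, nsmul_eq_mul, mul_one, sq_abs] at h1
      have h2 : ∑ l, |Vi h l| = Real.sqrt ((∑ l, |Vi h l|) ^ 2) :=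
        (Real.sqrt_sq (Finset.sum_nonneg fun l _ => abs_nonneg _)).symm
      rw [h2, ← Real.sqrt_mul (by positivity : (0:ℝ) ≤ (H:ℝ))]
      exact Real.sqrt_le_sqrt h1
    have hst : Real.sqrt t ≤ (Real.sqrt (lamMin V))⁻¹ := by
      rw [← Real.sqrt_inv]
      exact Real.sqrt_le_sqrt ht_le
    calc |M'' h i j| ≤ (∑ l, |Vi h l|) * K := habs
      _ ≤ (Real.sqrt H * Real.sqrt t) * K := mul_le_mul_of_nonneg_right hCS hK0
      _ ≤ (Real.sqrt H * (Real.sqrt (lamMin V))⁻¹) * K := by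
          exact mul_le_mul_of_nonneg_right
            (mul_le_mul_of_nonneg_left hst (Real.sqrt_nonneg _)) hK0
      _ = (Real.sqrt (lamMin V))⁻¹ * Real.sqrt (H : ℝ) * K := by ring
end
end

section
/- There exists an absolute constant C > 0 such that the following holds for every N ≥ 2. Let π be a uniformly random permutation of {1,…,N}, and let A = (a_{ij}), B = (b_{ij}), D = (d_{ij}) be real N×N matrices each of whose row sums and column sums are all zero, with |a_{ij}| ≤ α, |b_{ij}| ≤ β, |d_{ij}| ≤ δ for all i,j. Then: (i) for any real N×N matrix M with |M(i,j)| ≤ B₀ for all i,j, Var(∑_{i=1}^N M(i,π(i))) ≤ C N B₀²; (ii) Var(∑_{i≠j} a_{iπ(i)} b_{jπ(j)}) ≤ C N² α² β²; (iii) Var(∑_{i≠j} a_{iπ(j)} b_{jπ(i)}) ≤ C N² α² β²; (iv) Var(∑_{i≠j} a_{iπ(i)} b_{jπ(j)} d_{iπ(j)}) ≤ C N³ α² β² δ²; (v) Var(∑_{i≠j} a_{iπ(i)} b_{jπ(i)} d_{iπ(j)}) ≤ C N³ α² β² δ². -/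
open Finset Matrix
open scoped Classical

noncomputable section

/-- Variance with respect to the uniform distribution on permutations of `{1,…,N}`. -/
def pvar {N : ℕ} (f : Equiv.Perm (Fin N) → ℝ) : ℝ :=
  pexp (fun π => (f π - pexp f) ^ 2)


lemma perm_cond_identity {N : ℕ} (T : Finset (Fin N)) (i : Fin N) (hi : i ∉ T)
    (F : Fin N → ℝ) (hF : ∑ v, F v = 0)
    (G : Equiv.Perm (Fin N) → ℝ)
    (hG : ∀ π σ : Equiv.Perm (Fin N), (∀ t ∈ T, π t = σ t) → G π = G σ) :
    ((N : ℝ) - T.card) * ∑ π : Equiv.Perm (Fin N), F (π i) * G π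
      = - ∑ π : Equiv.Perm (Fin N), (∑ t ∈ T, F (π t)) * G π := by
  classical
  set S : Equiv.Perm (Fin N) → Finset (Fin N) := fun π => (T.image π)ᶜ with hS
  -- the involution
  have hinv : Function.Involutive (fun x : Equiv.Perm (Fin N) × Fin N =>
      (Equiv.swap (x.1 i) x.2 * x.1, x.1 i)) := by
    rintro ⟨π, v⟩
    simp only [Prod.mk.injEq]
    constructor
    · have h1 : (Equiv.swap (π i) v * π) i = v := by simp [Equiv.swap_apply_left]
      rw [h1, Equiv.swap_comm, ← mul_assoc, Equiv.swap_mul_self, one_mul]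
    · simp [Equiv.swap_apply_left]
  have key : ∑ x : Equiv.Perm (Fin N) × Fin N,
        (if x.2 ∈ S x.1 then F (x.1 i) * G x.1 else 0)
      = ∑ x : Equiv.Perm (Fin N) × Fin N,
        (if x.2 ∈ S x.1 then F x.2 * G x.1 else 0) := by
    refine Fintype.sum_equiv hinv.toPerm _ _ ?_
    rintro ⟨π, v⟩
    simp only [Function.Involutive.coe_toPerm]
    set σ : Equiv.Perm (Fin N) := Equiv.swap (π i) v * π with hσ
    by_cases hv : v ∈ S π
    · have hvim : v ∉ T.image π := by simpa [hS] using hv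
      have hagree : ∀ t ∈ T, σ t = π t := by
        intro t ht
        have hne1 : π t ≠ π i := fun h => hi (by rwa [π.injective h] at ht)
        have hne2 : π t ≠ v := fun h => hvim (Finset.mem_image.mpr ⟨t, ht, h⟩)
        simp [hσ, Equiv.swap_apply_of_ne_of_ne hne1 hne2]
      have him : T.image σ = T.image π := Finset.image_congr (fun t ht => hagree t ht)
      have hpiS : π i ∈ S σ := by
        simp only [hS, Finset.mem_compl, him]
        intro hmem
        obtain ⟨t, ht, hteq⟩ := Finset.mem_image.mp hmem
        exact hi (by rwa [π.injective hteq] at ht)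
      have hσi : σ i = v := by simp [hσ, Equiv.swap_apply_left]
      rw [if_pos hv]
      simp only [show π i ∈ S (Equiv.swap (π i) v * π) from hpiS, if_true]
      rw [hG π σ (fun t ht => (hagree t ht).symm)]
    · have hvim : v ∈ T.image π := by simpa [hS] using hv
      obtain ⟨t₀, ht₀, hteq⟩ := Finset.mem_image.mp hvim
      have : π i ∉ S σ := by
        simp only [hS, Finset.mem_compl, not_not]
        refine Finset.mem_image.mpr ⟨t₀, ht₀, ?_⟩
        rw [hσ]
        simp [hteq, Equiv.swap_apply_right]
      rw [if_neg hv]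
      simp only [show π i ∉ S (Equiv.swap (π i) v * π) from this, if_false]
  have hcard : ∀ π : Equiv.Perm (Fin N), (S π).card = N - T.card := by
    intro π
    rw [hS]
    simp [Finset.card_compl, Finset.card_image_of_injective _ π.injective]
  have hTle : T.card ≤ N := by simpa using Finset.card_le_univ T
  -- LHS computation
  have hL : ∑ x : Equiv.Perm (Fin N) × Fin N,
        (if x.2 ∈ S x.1 then F (x.1 i) * G x.1 else 0)
      = ((N : ℝ) - T.card) * ∑ π : Equiv.Perm (Fin N), F (π i) * G π := by
    rw [Fintype.sum_prod_type, Finset.mul_sum]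
    refine Finset.sum_congr rfl fun π _ => ?_
    show (∑ y : Fin N, if y ∈ S π then F (π i) * G π else 0) = _
    rw [Finset.sum_ite_mem, Finset.univ_inter, Finset.sum_const, hcard π,
      nsmul_eq_mul, Nat.cast_sub hTle]
  have hR : ∑ x : Equiv.Perm (Fin N) × Fin N,
        (if x.2 ∈ S x.1 then F x.2 * G x.1 else 0)
      = - ∑ π : Equiv.Perm (Fin N), (∑ t ∈ T, F (π t)) * G π := by
    rw [Fintype.sum_prod_type, ← Finset.sum_neg_distrib]
    refine Finset.sum_congr rfl fun π _ => ?_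
    show (∑ y : Fin N, if y ∈ S π then F y * G π else 0) = _
    rw [Finset.sum_ite_mem, Finset.univ_inter, ← Finset.sum_mul]
    have : ∑ v ∈ S π, F v = - ∑ t ∈ T, F (π t) := by
      have h1 : ∑ v ∈ S π, F v + ∑ v ∈ T.image π, F v = ∑ v, F v := by
        rw [hS]; exact Finset.sum_compl_add_sum _ _
      have h2 : ∑ v ∈ T.image π, F v = ∑ t ∈ T, F (π t) :=
        Finset.sum_image (fun a _ b _ h => π.injective h)
      rw [h2, hF] at h1
      linarith
    rw [this, neg_mul]
  rw [← hL, key, hR]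

lemma card_perm_real (N : ℕ) :
    (Finset.univ : Finset (Equiv.Perm (Fin N))).card = Nat.factorial N := by
  simp [Finset.card_univ, Fintype.card_perm, Fintype.card_fin]

/-- trivial bound on a sum over permutations -/
lemma triv_bound {N : ℕ} (f : Equiv.Perm (Fin N) → ℝ) (b : ℝ)
    (h : ∀ π, |f π| ≤ b) :
    |∑ π : Equiv.Perm (Fin N), f π| ≤ (Nat.factorial N : ℝ) * b := by
  calc |∑ π : Equiv.Perm (Fin N), f π| ≤ ∑ π : Equiv.Perm (Fin N), |f π| :=
        Finset.abs_sum_le_sum_abs _ _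
    _ ≤ ∑ _π : Equiv.Perm (Fin N), b := Finset.sum_le_sum (fun π _ => h π)
    _ = (Nat.factorial N : ℝ) * b := by
        rw [Finset.sum_const, card_perm_real, nsmul_eq_mul]

/-- conditioning bound with a set of at most 3 reference points -/
lemma cond_core {N : ℕ} (T : Finset (Fin N)) (i : Fin N) (hi : i ∉ T)
    (F : Fin N → ℝ) (hF : ∑ v, F v = 0) (c : ℝ) (hc : ∀ v, |F v| ≤ c)
    (G : Equiv.Perm (Fin N) → ℝ)
    (hG : ∀ π σ : Equiv.Perm (Fin N), (∀ t ∈ T, π t = σ t) → G π = G σ)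
    (g : ℝ) (hg : ∀ π, |G π| ≤ g) (hTN : (T.card : ℝ) < N) :
    |∑ π : Equiv.Perm (Fin N), F (π i) * G π|
      ≤ (T.card : ℝ) * c * g / ((N : ℝ) - T.card) * Nat.factorial N := by
  have hc0 : 0 ≤ c := le_trans (abs_nonneg _) (hc i)
  have hg0 : 0 ≤ g := le_trans (abs_nonneg _) (hg 1)
  have hpos : (0 : ℝ) < (N : ℝ) - T.card := by linarith
  have hid := perm_cond_identity T i hi F hF G hG
  have hb : |∑ π : Equiv.Perm (Fin N), (∑ t ∈ T, F (π t)) * G π|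
      ≤ (Nat.factorial N : ℝ) * ((T.card : ℝ) * c * g) := by
    refine triv_bound _ _ (fun π => ?_)
    rw [abs_mul]
    have h1 : |∑ t ∈ T, F (π t)| ≤ (T.card : ℝ) * c := by
      calc |∑ t ∈ T, F (π t)| ≤ ∑ t ∈ T, |F (π t)| := Finset.abs_sum_le_sum_abs _ _
        _ ≤ ∑ _t ∈ T, c := Finset.sum_le_sum (fun t _ => hc _)
        _ = (T.card : ℝ) * c := by rw [Finset.sum_const, nsmul_eq_mul]
    calc |∑ t ∈ T, F (π t)| * |G π| ≤ ((T.card : ℝ) * c) * g :=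
          mul_le_mul h1 (hg π) (abs_nonneg _) (by positivity)
      _ = (T.card : ℝ) * c * g := by ring
  have h2 : ((N : ℝ) - T.card) * |∑ π : Equiv.Perm (Fin N), F (π i) * G π|
      ≤ (Nat.factorial N : ℝ) * ((T.card : ℝ) * c * g) := by
    rw [← abs_of_pos hpos, ← abs_mul, hid, abs_neg]
    exact hb
  rw [div_mul_eq_mul_div, le_div_iff₀ hpos]
  calc |∑ π : Equiv.Perm (Fin N), F (π i) * G π| * ((N:ℝ) - T.card)
      = ((N : ℝ) - T.card) * |∑ π : Equiv.Perm (Fin N), F (π i) * G π| := by ring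
    _ ≤ (Nat.factorial N : ℝ) * ((T.card : ℝ) * c * g) := h2
    _ = (T.card : ℝ) * c * g * Nat.factorial N := by ring

/-- singleton conditioning on up to three other points -/
lemma cond3 {N : ℕ} (hN : 3 < (N : ℝ)) (F : Fin N → ℝ) (hF : ∑ v, F v = 0)
    (c : ℝ) (hc : ∀ v, |F v| ≤ c)
    (i t1 t2 t3 : Fin N) (h1 : i ≠ t1) (h2 : i ≠ t2) (h3 : i ≠ t3)
    (Gf : Fin N → Fin N → Fin N → ℝ) (g : ℝ) (hg : ∀ a b d, |Gf a b d| ≤ g) :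
    |∑ π : Equiv.Perm (Fin N), F (π i) * Gf (π t1) (π t2) (π t3)|
      ≤ 3 * c * g / ((N : ℝ) - 3) * Nat.factorial N := by
  have hc0 : 0 ≤ c := le_trans (abs_nonneg _) (hc i)
  have hg0 : 0 ≤ g := le_trans (abs_nonneg _) (hg i i i)
  set T : Finset (Fin N) := {t1, t2, t3} with hT
  have hiT : i ∉ T := by simp [hT, h1, h2, h3]
  have hcard3 : T.card ≤ 3 := by
    calc T.card ≤ ({t2, t3} : Finset (Fin N)).card + 1 := Finset.card_insert_le _ _
      _ ≤ (({t3} : Finset (Fin N)).card + 1) + 1 := by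
          exact add_le_add_left (Finset.card_insert_le _ _) 1
      _ ≤ 3 := by simp
  have hTN : (T.card : ℝ) < N := by
    have : (T.card : ℝ) ≤ 3 := by exact_mod_cast hcard3
    linarith
  have hb := cond_core T i hiT F hF c hc
    (fun π => Gf (π t1) (π t2) (π t3))
    (by
      intro π σ h
      rw [h t1 (by simp [hT]), h t2 (by simp [hT]), h t3 (by simp [hT])])
    g (fun π => hg _ _ _) hTN
  refine le_trans hb ?_
  have hfac : (0:ℝ) ≤ Nat.factorial N := by positivity
  refine mul_le_mul_of_nonneg_right ?_ hfac
  rw [div_le_div_iff₀ (by linarith) (by linarith)]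
  have hcr : (T.card : ℝ) ≤ 3 := by exact_mod_cast hcard3
  nlinarith [mul_nonneg (mul_nonneg (mul_nonneg hc0 hg0) (by linarith : (0:ℝ) ≤ 3 - (T.card:ℝ))) (by linarith : (0:ℝ) ≤ (N:ℝ))]

lemma fac_pos_real (N : ℕ) : (0:ℝ) < (Nat.factorial N : ℝ) := by
  exact_mod_cast Nat.factorial_pos N

lemma pvar_eq {N : ℕ} (f : Equiv.Perm (Fin N) → ℝ) :
    pvar f = pexp (fun π => f π ^ 2) - (pexp f) ^ 2 := by
  have hf := (fac_pos_real N).ne'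
  unfold pvar pexp
  have hexp : ∀ π : Equiv.Perm (Fin N),
      (f π - (∑ σ : Equiv.Perm (Fin N), f σ) / (Nat.factorial N : ℝ)) ^ 2
      = f π ^ 2 - 2 * ((∑ σ : Equiv.Perm (Fin N), f σ) / (Nat.factorial N : ℝ)) * f π
        + ((∑ σ : Equiv.Perm (Fin N), f σ) / (Nat.factorial N : ℝ)) ^ 2 := by
    intro π; ring
  rw [Finset.sum_congr rfl (fun π _ => hexp π)]
  rw [Finset.sum_add_distrib, Finset.sum_sub_distrib, ← Finset.mul_sum, Finset.sum_const,
    card_perm_real, nsmul_eq_mul]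
  field_simp
  ring

lemma pvar_le_pexp_sq {N : ℕ} (f : Equiv.Perm (Fin N) → ℝ) :
    pvar f ≤ pexp (fun π => f π ^ 2) := by
  rw [pvar_eq]
  nlinarith [sq_nonneg (pexp f)]

lemma pvar_add_const {N : ℕ} (f : Equiv.Perm (Fin N) → ℝ) (c : ℝ) :
    pvar (fun π => f π + c) = pvar f := by
  have hf := (fac_pos_real N).ne'
  unfold pvar pexp
  congr 1
  refine Finset.sum_congr rfl (fun π _ => ?_)
  have : (∑ σ : Equiv.Perm (Fin N), (f σ + c)) / (Nat.factorial N : ℝ)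
      = (∑ σ : Equiv.Perm (Fin N), f σ) / (Nat.factorial N : ℝ) + c := by
    rw [Finset.sum_add_distrib, Finset.sum_const, card_perm_real, nsmul_eq_mul]
    field_simp
  rw [this]; ring

lemma pexp_sq_le {N : ℕ} (f : Equiv.Perm (Fin N) → ℝ) (X : ℝ)
    (h : ∑ π : Equiv.Perm (Fin N), f π ^ 2 ≤ (Nat.factorial N : ℝ) * X) :
    pexp (fun π => f π ^ 2) ≤ X := by
  unfold pexp
  rw [div_le_iff₀ (fac_pos_real N)]
  calc ∑ π : Equiv.Perm (Fin N), f π ^ 2 ≤ (Nat.factorial N : ℝ) * X := h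
    _ = X * (Nat.factorial N : ℝ) := by ring

/-- split identity for three distinct reference points -/
lemma split3_bound {N : ℕ} (hN : 3 < (N : ℝ)) (F : Fin N → ℝ) (hF : ∑ v, F v = 0)
    (i t1 t2 t3 : Fin N) (h1 : i ≠ t1) (h2 : i ≠ t2) (h3 : i ≠ t3)
    (h12 : t1 ≠ t2) (h13 : t1 ≠ t3) (h23 : t2 ≠ t3)
    (Gf : Fin N → Fin N → Fin N → ℝ) :
    |∑ π : Equiv.Perm (Fin N), F (π i) * Gf (π t1) (π t2) (π t3)|
      ≤ (|∑ π : Equiv.Perm (Fin N), F (π t1) * Gf (π t1) (π t2) (π t3)|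
        + |∑ π : Equiv.Perm (Fin N), F (π t2) * Gf (π t1) (π t2) (π t3)|
        + |∑ π : Equiv.Perm (Fin N), F (π t3) * Gf (π t1) (π t2) (π t3)|)
        / ((N : ℝ) - 3) := by
  set T : Finset (Fin N) := {t1, t2, t3} with hT
  have hiT : i ∉ T := by simp [hT, h1, h2, h3]
  have hcard : T.card = 3 := by
    rw [hT, Finset.card_insert_of_notMem (by simp [h12, h13]),
      Finset.card_insert_of_notMem (by simp [h23]), Finset.card_singleton]
  have hid := perm_cond_identity T i hiT F hF
    (fun π => Gf (π t1) (π t2) (π t3))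
    (by
      intro π σ h
      rw [h t1 (by simp [hT]), h t2 (by simp [hT]), h t3 (by simp [hT])])
  rw [hcard] at hid
  simp only [Nat.cast_ofNat] at hid
  have hsplit : ∀ π : Equiv.Perm (Fin N),
      (∑ t ∈ T, F (π t)) = F (π t1) + F (π t2) + F (π t3) := by
    intro π
    rw [hT, Finset.sum_insert (by simp [h12, h13]), Finset.sum_insert (by simp [h23]),
      Finset.sum_singleton]
    ring
  have hpos : (0:ℝ) < (N:ℝ) - 3 := by linarith
  rw [le_div_iff₀ hpos]
  have heq : ((N:ℝ) - 3) * ∑ π : Equiv.Perm (Fin N), F (π i) * Gf (π t1) (π t2) (π t3)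
      = -(∑ π : Equiv.Perm (Fin N), F (π t1) * Gf (π t1) (π t2) (π t3)
        + ∑ π : Equiv.Perm (Fin N), F (π t2) * Gf (π t1) (π t2) (π t3)
        + ∑ π : Equiv.Perm (Fin N), F (π t3) * Gf (π t1) (π t2) (π t3)) := by
    rw [hid]
    rw [← Finset.sum_add_distrib, ← Finset.sum_add_distrib]
    congr 1
    refine Finset.sum_congr rfl (fun π _ => ?_)
    rw [hsplit π]
    ring
  calc |∑ π : Equiv.Perm (Fin N), F (π i) * Gf (π t1) (π t2) (π t3)| * ((N:ℝ) - 3)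
      = |((N:ℝ) - 3) * ∑ π : Equiv.Perm (Fin N), F (π i) * Gf (π t1) (π t2) (π t3)| := by
        rw [abs_mul, abs_of_pos hpos]; ring
    _ = |∑ π : Equiv.Perm (Fin N), F (π t1) * Gf (π t1) (π t2) (π t3)
        + ∑ π : Equiv.Perm (Fin N), F (π t2) * Gf (π t1) (π t2) (π t3)
        + ∑ π : Equiv.Perm (Fin N), F (π t3) * Gf (π t1) (π t2) (π t3)| := by
        rw [heq, abs_neg]
    _ ≤ _ := by
        refine le_trans (abs_add_le _ _) ?_
        exact add_le_add_left (abs_add_le _ _) _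


lemma abs_mul_le {x y a b : ℝ} (hx : |x| ≤ a) (hy : |y| ≤ b) : |x * y| ≤ a * b := by
  rw [abs_mul]
  exact mul_le_mul hx hy (abs_nonneg _) (le_trans (abs_nonneg _) hx)

lemma cond1 {N : ℕ} (hN : 1 < (N : ℝ)) (F : Fin N → ℝ) (hF : ∑ v, F v = 0)
    (c : ℝ) (hc : ∀ v, |F v| ≤ c) (i k : Fin N) (hik : i ≠ k)
    (Gf : Fin N → ℝ) (g : ℝ) (hg : ∀ a, |Gf a| ≤ g) :
    |∑ π : Equiv.Perm (Fin N), F (π i) * Gf (π k)|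
      ≤ c * g / ((N : ℝ) - 1) * Nat.factorial N := by
  have hb := cond_core {k} i (by simp [hik]) F hF c hc
    (fun π => Gf (π k))
    (by intro π σ h; rw [h k (by simp)])
    g (fun π => hg _) (by simp only [Finset.card_singleton, Nat.cast_one]; linarith)
  simpa using hb

lemma ii_B4 {N : ℕ} (hN : 6 ≤ (N : ℝ)) (A B : Matrix (Fin N) (Fin N) ℝ) (α β : ℝ)
    (hA1 : ∀ i, ∑ j, A i j = 0) (hB1 : ∀ i, ∑ j, B i j = 0)
    (hAb : ∀ i j, |A i j| ≤ α) (hBb : ∀ i j, |B i j| ≤ β)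
    (i j k l : Fin N) (hij : i ≠ j) (hkl : k ≠ l) (hik : i ≠ k) (hil : i ≠ l)
    (hjk : j ≠ k) (hjl : j ≠ l) :
    |∑ π : Equiv.Perm (Fin N), (A i (π i) * B j (π j)) * (A k (π k) * B l (π l))|
      ≤ 36 * (α ^ 2 * β ^ 2) / (N : ℝ) ^ 2 * Nat.factorial N := by
  have hα : 0 ≤ α := le_trans (abs_nonneg _) (hAb i i)
  have hβ : 0 ≤ β := le_trans (abs_nonneg _) (hBb i i)
  have h3 : 3 < (N : ℝ) := by linarith
  have h30 : (0:ℝ) < (N:ℝ) - 3 := by linarith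
  set Q : ℝ := α ^ 2 * β ^ 2 * (Nat.factorial N : ℝ) with hQ
  have hQ0 : 0 ≤ Q := by positivity
  -- first conditioning
  have hsp := split3_bound h3 (fun v => A i v) (hA1 i) i j k l hij hik hil hjk hjl hkl
    (fun a b c => B j a * (A k b * B l c))
  have e0 : ∑ π : Equiv.Perm (Fin N), (A i (π i) * B j (π j)) * (A k (π k) * B l (π l))
      = ∑ π : Equiv.Perm (Fin N), A i (π i) * (B j (π j) * (A k (π k) * B l (π l))) := by
    refine Finset.sum_congr rfl fun π _ => ?_; ring
  rw [e0]
  -- the three second-stage terms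
  have hSj : |∑ π : Equiv.Perm (Fin N), A i (π j) * (B j (π j) * (A k (π k) * B l (π l)))|
      ≤ 3 * Q / ((N:ℝ) - 3) := by
    have h := cond3 h3 (fun v => B l v) (hB1 l) β (fun v => hBb l v)
      l j k k (Ne.symm hjl) (Ne.symm hkl) (Ne.symm hkl)
      (fun a b c => A i a * B j a * A k b) (α * β * α)
      (fun a b c => abs_mul_le (abs_mul_le (hAb i a) (hBb j a)) (hAb k b))
    have e1 : ∑ π : Equiv.Perm (Fin N), A i (π j) * (B j (π j) * (A k (π k) * B l (π l)))
        = ∑ π : Equiv.Perm (Fin N), B l (π l) * (A i (π j) * B j (π j) * A k (π k)) := by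
      refine Finset.sum_congr rfl fun π _ => ?_; ring
    rw [e1]
    calc _ ≤ 3 * β * (α * β * α) / ((N:ℝ) - 3) * Nat.factorial N := h
      _ = 3 * Q / ((N:ℝ) - 3) := by rw [hQ]; ring
  have hSk : |∑ π : Equiv.Perm (Fin N), A i (π k) * (B j (π j) * (A k (π k) * B l (π l)))|
      ≤ 3 * Q / ((N:ℝ) - 3) := by
    have h := cond3 h3 (fun v => B l v) (hB1 l) β (fun v => hBb l v)
      l k j j (Ne.symm hkl) (Ne.symm hjl) (Ne.symm hjl)
      (fun a b c => A i a * A k a * B j b) (α * α * β)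
      (fun a b c => abs_mul_le (abs_mul_le (hAb i a) (hAb k a)) (hBb j b))
    have e1 : ∑ π : Equiv.Perm (Fin N), A i (π k) * (B j (π j) * (A k (π k) * B l (π l)))
        = ∑ π : Equiv.Perm (Fin N), B l (π l) * (A i (π k) * A k (π k) * B j (π j)) := by
      refine Finset.sum_congr rfl fun π _ => ?_; ring
    rw [e1]
    calc _ ≤ 3 * β * (α * α * β) / ((N:ℝ) - 3) * Nat.factorial N := h
      _ = 3 * Q / ((N:ℝ) - 3) := by rw [hQ]; ring
  have hSl : |∑ π : Equiv.Perm (Fin N), A i (π l) * (B j (π j) * (A k (π k) * B l (π l)))|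
      ≤ 3 * Q / ((N:ℝ) - 3) := by
    have h := cond3 h3 (fun v => B j v) (hB1 j) β (fun v => hBb j v)
      j l k k hjl hjk hjk
      (fun a b c => A i a * B l a * A k b) (α * β * α)
      (fun a b c => abs_mul_le (abs_mul_le (hAb i a) (hBb l a)) (hAb k b))
    have e1 : ∑ π : Equiv.Perm (Fin N), A i (π l) * (B j (π j) * (A k (π k) * B l (π l)))
        = ∑ π : Equiv.Perm (Fin N), B j (π j) * (A i (π l) * B l (π l) * A k (π k)) := by
      refine Finset.sum_congr rfl fun π _ => ?_; ring
    rw [e1]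
    calc _ ≤ 3 * β * (α * β * α) / ((N:ℝ) - 3) * Nat.factorial N := h
      _ = 3 * Q / ((N:ℝ) - 3) := by rw [hQ]; ring
  calc |∑ π : Equiv.Perm (Fin N), A i (π i) * (B j (π j) * (A k (π k) * B l (π l)))|
      ≤ (|∑ π : Equiv.Perm (Fin N), A i (π j) * (B j (π j) * (A k (π k) * B l (π l)))|
        + |∑ π : Equiv.Perm (Fin N), A i (π k) * (B j (π j) * (A k (π k) * B l (π l)))|
        + |∑ π : Equiv.Perm (Fin N), A i (π l) * (B j (π j) * (A k (π k) * B l (π l)))|)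
        / ((N:ℝ) - 3) := hsp
    _ ≤ (3 * Q / ((N:ℝ) - 3) + 3 * Q / ((N:ℝ) - 3) + 3 * Q / ((N:ℝ) - 3)) / ((N:ℝ) - 3) := by
        exact (div_le_div_iff_of_pos_right h30).mpr (by linarith [hSj, hSk, hSl])
    _ = (9 * Q / ((N:ℝ) - 3)) / ((N:ℝ) - 3) := by ring
    _ = 9 * Q / (((N:ℝ) - 3) * ((N:ℝ) - 3)) := div_div _ _ _
    _ ≤ 36 * (α ^ 2 * β ^ 2) / (N : ℝ) ^ 2 * Nat.factorial N := by
        have h2 : 36 * (α ^ 2 * β ^ 2) / (N : ℝ) ^ 2 * Nat.factorial N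
            = 36 * Q / (N:ℝ)^2 := by rw [hQ]; ring
        rw [h2, div_le_div_iff₀ (by positivity) (by positivity : (0:ℝ) < (N:ℝ)^2)]
        nlinarith [mul_nonneg hQ0 (show (0:ℝ) ≤ 4*((N:ℝ)-3)*((N:ℝ)-3) - (N:ℝ)^2 by
          nlinarith [mul_nonneg (show (0:ℝ) ≤ (N:ℝ)-6 by linarith) (show (0:ℝ) ≤ (N:ℝ)-2 by linarith)])]

lemma three_div_step {N : ℕ} (hN : 6 ≤ (N : ℝ)) (E : ℝ) (hE : 0 ≤ E) :
    3 * E / ((N : ℝ) - 3) * Nat.factorial N ≤ 6 * E / (N : ℝ) * Nat.factorial N := by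
  have h1 : (0:ℝ) < (N:ℝ) - 3 := by linarith
  have h2 : (0:ℝ) < (N:ℝ) := by linarith
  have hf : (0:ℝ) ≤ (Nat.factorial N : ℝ) := le_of_lt (fac_pos_real N)
  refine mul_le_mul_of_nonneg_right ?_ hf
  rw [div_le_div_iff₀ h1 h2]
  nlinarith [mul_nonneg hE (show (0:ℝ) ≤ (N:ℝ) - 6 by linarith)]

lemma ii_B3 {N : ℕ} (hN : 6 ≤ (N : ℝ)) (A B : Matrix (Fin N) (Fin N) ℝ) (α β : ℝ)
    (hA1 : ∀ i, ∑ j, A i j = 0) (hB1 : ∀ i, ∑ j, B i j = 0)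
    (hAb : ∀ i j, |A i j| ≤ α) (hBb : ∀ i j, |B i j| ≤ β)
    (i j k l : Fin N) (hij : i ≠ j) (hkl : k ≠ l)
    (hn1 : ¬(i = k ∧ j = l)) (hn2 : ¬(i = l ∧ j = k)) :
    |∑ π : Equiv.Perm (Fin N), (A i (π i) * B j (π j)) * (A k (π k) * B l (π l))|
      ≤ 6 * (α ^ 2 * β ^ 2) / (N : ℝ) * Nat.factorial N := by
  have hα : 0 ≤ α := le_trans (abs_nonneg _) (hAb i i)
  have hβ : 0 ≤ β := le_trans (abs_nonneg _) (hBb i i)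
  have h3 : 3 < (N : ℝ) := by linarith
  have hE : (0:ℝ) ≤ α ^ 2 * β ^ 2 := by positivity
  by_cases hjl : j = l
  · -- case (c) : j = l, so i ∉ {j,k,l}
    have hik : i ≠ k := fun h => hn1 ⟨h, hjl⟩
    subst hjl
    have h := cond3 h3 (fun v => A i v) (hA1 i) α (fun v => hAb i v)
      i j k k hij hik hik
      (fun a b c => B j a * B j a * A k b) (β * β * α)
      (fun a b c => abs_mul_le (abs_mul_le (hBb j a) (hBb j a)) (hAb k b))
    have e1 : ∑ π : Equiv.Perm (Fin N), (A i (π i) * B j (π j)) * (A k (π k) * B j (π j))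
        = ∑ π : Equiv.Perm (Fin N), A i (π i) * (B j (π j) * B j (π j) * A k (π k)) := by
      refine Finset.sum_congr rfl fun π _ => ?_; ring
    rw [e1]
    calc _ ≤ 3 * α * (β * β * α) / ((N:ℝ) - 3) * Nat.factorial N := h
      _ = 3 * (α ^ 2 * β ^ 2) / ((N:ℝ) - 3) * Nat.factorial N := by ring
      _ ≤ _ := three_div_step hN _ hE
  · by_cases hli : l = i
    · -- case (b') : l = i, singleton π j
      have hjk : j ≠ k := fun h => hn2 ⟨hli.symm, h⟩
      have hjl' : j ≠ l := hjl
      have h := cond3 h3 (fun v => B j v) (hB1 j) β (fun v => hBb j v)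
        j i k l (Ne.symm hij) hjk hjl'
        (fun a b c => A i a * A k b * B l c) (α * α * β)
        (fun a b c => abs_mul_le (abs_mul_le (hAb i a) (hAb k b)) (hBb l c))
      have e1 : ∑ π : Equiv.Perm (Fin N), (A i (π i) * B j (π j)) * (A k (π k) * B l (π l))
          = ∑ π : Equiv.Perm (Fin N), B j (π j) * (A i (π i) * A k (π k) * B l (π l)) := by
        refine Finset.sum_congr rfl fun π _ => ?_; ring
      rw [e1]
      calc _ ≤ 3 * β * (α * α * β) / ((N:ℝ) - 3) * Nat.factorial N := h
        _ = 3 * (α ^ 2 * β ^ 2) / ((N:ℝ) - 3) * Nat.factorial N := by ring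
        _ ≤ _ := three_div_step hN _ hE
    · by_cases hlk : l = k
      · exact absurd hlk.symm hkl
      · -- case (a) : l ∉ {i,j,k}, singleton π l
        have h := cond3 h3 (fun v => B l v) (hB1 l) β (fun v => hBb l v)
          l i j k hli (Ne.symm hjl) hlk
          (fun a b c => A i a * B j b * A k c) (α * β * α)
          (fun a b c => abs_mul_le (abs_mul_le (hAb i a) (hBb j b)) (hAb k c))
        have e1 : ∑ π : Equiv.Perm (Fin N), (A i (π i) * B j (π j)) * (A k (π k) * B l (π l))
            = ∑ π : Equiv.Perm (Fin N), B l (π l) * (A i (π i) * B j (π j) * A k (π k)) := by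
          refine Finset.sum_congr rfl fun π _ => ?_; ring
        rw [e1]
        calc _ ≤ 3 * β * (α * β * α) / ((N:ℝ) - 3) * Nat.factorial N := h
          _ = 3 * (α ^ 2 * β ^ 2) / ((N:ℝ) - 3) * Nat.factorial N := by ring
          _ ≤ _ := three_div_step hN _ hE

lemma iii_B4 {N : ℕ} (hN : 6 ≤ (N : ℝ)) (A B : Matrix (Fin N) (Fin N) ℝ) (α β : ℝ)
    (hA1 : ∀ i, ∑ j, A i j = 0) (hB1 : ∀ i, ∑ j, B i j = 0)
    (hAb : ∀ i j, |A i j| ≤ α) (hBb : ∀ i j, |B i j| ≤ β)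
    (i j k l : Fin N) (hij : i ≠ j) (hkl : k ≠ l) (hik : i ≠ k) (hil : i ≠ l)
    (hjk : j ≠ k) (hjl : j ≠ l) :
    |∑ π : Equiv.Perm (Fin N), (A i (π j) * B j (π i)) * (A k (π l) * B l (π k))|
      ≤ 36 * (α ^ 2 * β ^ 2) / (N : ℝ) ^ 2 * Nat.factorial N := by
  have hα : 0 ≤ α := le_trans (abs_nonneg _) (hAb i i)
  have hβ : 0 ≤ β := le_trans (abs_nonneg _) (hBb i i)
  have h3 : 3 < (N : ℝ) := by linarith
  have h30 : (0:ℝ) < (N:ℝ) - 3 := by linarith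
  set Q : ℝ := α ^ 2 * β ^ 2 * (Nat.factorial N : ℝ) with hQ
  have hQ0 : 0 ≤ Q := by positivity
  have hsp := split3_bound h3 (fun v => A i v) (hA1 i) j i k l (Ne.symm hij) hjk hjl
    hik hil hkl (fun a b c => B j a * (A k c * B l b))
  have e0 : ∑ π : Equiv.Perm (Fin N), (A i (π j) * B j (π i)) * (A k (π l) * B l (π k))
      = ∑ π : Equiv.Perm (Fin N), A i (π j) * (B j (π i) * (A k (π l) * B l (π k))) := by
    refine Finset.sum_congr rfl fun π _ => ?_; ring
  rw [e0]
  have hSi : |∑ π : Equiv.Perm (Fin N), A i (π i) * (B j (π i) * (A k (π l) * B l (π k)))|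
      ≤ 3 * Q / ((N:ℝ) - 3) := by
    have h := cond3 h3 (fun v => B l v) (hB1 l) β (fun v => hBb l v)
      k i l l (Ne.symm hik) hkl hkl
      (fun a b c => A i a * B j a * A k b) (α * β * α)
      (fun a b c => abs_mul_le (abs_mul_le (hAb i a) (hBb j a)) (hAb k b))
    have e1 : ∑ π : Equiv.Perm (Fin N), A i (π i) * (B j (π i) * (A k (π l) * B l (π k)))
        = ∑ π : Equiv.Perm (Fin N), B l (π k) * (A i (π i) * B j (π i) * A k (π l)) := by
      refine Finset.sum_congr rfl fun π _ => ?_; ring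
    rw [e1]
    calc _ ≤ 3 * β * (α * β * α) / ((N:ℝ) - 3) * Nat.factorial N := h
      _ = 3 * Q / ((N:ℝ) - 3) := by rw [hQ]; ring
  have hSk : |∑ π : Equiv.Perm (Fin N), A i (π k) * (B j (π i) * (A k (π l) * B l (π k)))|
      ≤ 3 * Q / ((N:ℝ) - 3) := by
    have h := cond3 h3 (fun v => B j v) (hB1 j) β (fun v => hBb j v)
      i k l l hik hil hil
      (fun a b c => A i a * B l a * A k b) (α * β * α)
      (fun a b c => abs_mul_le (abs_mul_le (hAb i a) (hBb l a)) (hAb k b))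
    have e1 : ∑ π : Equiv.Perm (Fin N), A i (π k) * (B j (π i) * (A k (π l) * B l (π k)))
        = ∑ π : Equiv.Perm (Fin N), B j (π i) * (A i (π k) * B l (π k) * A k (π l)) := by
      refine Finset.sum_congr rfl fun π _ => ?_; ring
    rw [e1]
    calc _ ≤ 3 * β * (α * β * α) / ((N:ℝ) - 3) * Nat.factorial N := h
      _ = 3 * Q / ((N:ℝ) - 3) := by rw [hQ]; ring
  have hSl : |∑ π : Equiv.Perm (Fin N), A i (π l) * (B j (π i) * (A k (π l) * B l (π k)))|
      ≤ 3 * Q / ((N:ℝ) - 3) := by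
    have h := cond3 h3 (fun v => B l v) (hB1 l) β (fun v => hBb l v)
      k l i i hkl (Ne.symm hik) (Ne.symm hik)
      (fun a b c => A i a * A k a * B j b) (α * α * β)
      (fun a b c => abs_mul_le (abs_mul_le (hAb i a) (hAb k a)) (hBb j b))
    have e1 : ∑ π : Equiv.Perm (Fin N), A i (π l) * (B j (π i) * (A k (π l) * B l (π k)))
        = ∑ π : Equiv.Perm (Fin N), B l (π k) * (A i (π l) * A k (π l) * B j (π i)) := by
      refine Finset.sum_congr rfl fun π _ => ?_; ring
    rw [e1]
    calc _ ≤ 3 * β * (α * α * β) / ((N:ℝ) - 3) * Nat.factorial N := h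
      _ = 3 * Q / ((N:ℝ) - 3) := by rw [hQ]; ring
  calc |∑ π : Equiv.Perm (Fin N), A i (π j) * (B j (π i) * (A k (π l) * B l (π k)))|
      ≤ (|∑ π : Equiv.Perm (Fin N), A i (π i) * (B j (π i) * (A k (π l) * B l (π k)))|
        + |∑ π : Equiv.Perm (Fin N), A i (π k) * (B j (π i) * (A k (π l) * B l (π k)))|
        + |∑ π : Equiv.Perm (Fin N), A i (π l) * (B j (π i) * (A k (π l) * B l (π k)))|)
        / ((N:ℝ) - 3) := hsp
    _ ≤ (3 * Q / ((N:ℝ) - 3) + 3 * Q / ((N:ℝ) - 3) + 3 * Q / ((N:ℝ) - 3)) / ((N:ℝ) - 3) := by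
        exact (div_le_div_iff_of_pos_right h30).mpr (by linarith [hSi, hSk, hSl])
    _ = (9 * Q / ((N:ℝ) - 3)) / ((N:ℝ) - 3) := by ring
    _ = 9 * Q / (((N:ℝ) - 3) * ((N:ℝ) - 3)) := div_div _ _ _
    _ ≤ 36 * (α ^ 2 * β ^ 2) / (N : ℝ) ^ 2 * Nat.factorial N := by
        have h2 : 36 * (α ^ 2 * β ^ 2) / (N : ℝ) ^ 2 * Nat.factorial N
            = 36 * Q / (N:ℝ)^2 := by rw [hQ]; ring
        rw [h2, div_le_div_iff₀ (by positivity) (by positivity : (0:ℝ) < (N:ℝ)^2)]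
        nlinarith [mul_nonneg hQ0 (show (0:ℝ) ≤ 4*((N:ℝ)-3)*((N:ℝ)-3) - (N:ℝ)^2 by
          nlinarith [mul_nonneg (show (0:ℝ) ≤ (N:ℝ)-6 by linarith) (show (0:ℝ) ≤ (N:ℝ)-2 by linarith)])]

lemma iii_B3 {N : ℕ} (hN : 6 ≤ (N : ℝ)) (A B : Matrix (Fin N) (Fin N) ℝ) (α β : ℝ)
    (hA1 : ∀ i, ∑ j, A i j = 0) (hB1 : ∀ i, ∑ j, B i j = 0)
    (hAb : ∀ i j, |A i j| ≤ α) (hBb : ∀ i j, |B i j| ≤ β)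
    (i j k l : Fin N) (hij : i ≠ j) (hkl : k ≠ l)
    (hn1 : ¬(i = k ∧ j = l)) (hn2 : ¬(i = l ∧ j = k)) :
    |∑ π : Equiv.Perm (Fin N), (A i (π j) * B j (π i)) * (A k (π l) * B l (π k))|
      ≤ 6 * (α ^ 2 * β ^ 2) / (N : ℝ) * Nat.factorial N := by
  have hα : 0 ≤ α := le_trans (abs_nonneg _) (hAb i i)
  have hβ : 0 ≤ β := le_trans (abs_nonneg _) (hBb i i)
  have h3 : 3 < (N : ℝ) := by linarith
  have hE : (0:ℝ) ≤ α ^ 2 * β ^ 2 := by positivity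
  by_cases hjl : j = l
  · -- j = l : singleton π i
    have hik : i ≠ k := fun h => hn1 ⟨h, hjl⟩
    subst hjl
    have h := cond3 h3 (fun v => B j v) (hB1 j) β (fun v => hBb j v)
      i j k k hij hik hik
      (fun a b c => A i a * A k a * B j b) (α * α * β)
      (fun a b c => abs_mul_le (abs_mul_le (hAb i a) (hAb k a)) (hBb j b))
    have e1 : ∑ π : Equiv.Perm (Fin N), (A i (π j) * B j (π i)) * (A k (π j) * B j (π k))
        = ∑ π : Equiv.Perm (Fin N), B j (π i) * (A i (π j) * A k (π j) * B j (π k)) := by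
      refine Finset.sum_congr rfl fun π _ => ?_; ring
    rw [e1]
    calc _ ≤ 3 * β * (α * α * β) / ((N:ℝ) - 3) * Nat.factorial N := h
      _ = 3 * (α ^ 2 * β ^ 2) / ((N:ℝ) - 3) * Nat.factorial N := by ring
      _ ≤ _ := three_div_step hN _ hE
  · by_cases hli : l = i
    · -- l = i : singleton π j
      have hjk : j ≠ k := fun h => hn2 ⟨hli.symm, h⟩
      have h := cond3 h3 (fun v => A i v) (hA1 i) α (fun v => hAb i v)
        j i k l (Ne.symm hij) hjk hjl
        (fun a b c => B j a * (A k c * B l b)) (β * (α * β))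
        (fun a b c => abs_mul_le (hBb j a) (abs_mul_le (hAb k c) (hBb l b)))
      have e1 : ∑ π : Equiv.Perm (Fin N), (A i (π j) * B j (π i)) * (A k (π l) * B l (π k))
          = ∑ π : Equiv.Perm (Fin N), A i (π j) * (B j (π i) * (A k (π l) * B l (π k))) := by
        refine Finset.sum_congr rfl fun π _ => ?_; ring
      rw [e1]
      calc _ ≤ 3 * α * (β * (α * β)) / ((N:ℝ) - 3) * Nat.factorial N := h
        _ = 3 * (α ^ 2 * β ^ 2) / ((N:ℝ) - 3) * Nat.factorial N := by ring
        _ ≤ _ := three_div_step hN _ hE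
    · -- l ∉ {i,j,k} : singleton π l
      have h := cond3 h3 (fun v => A k v) (hA1 k) α (fun v => hAb k v)
        l j i k (Ne.symm hjl) hli (Ne.symm hkl)
        (fun a b c => A i a * B j b * B l c) (α * β * β)
        (fun a b c => abs_mul_le (abs_mul_le (hAb i a) (hBb j b)) (hBb l c))
      have e1 : ∑ π : Equiv.Perm (Fin N), (A i (π j) * B j (π i)) * (A k (π l) * B l (π k))
          = ∑ π : Equiv.Perm (Fin N), A k (π l) * (A i (π j) * B j (π i) * B l (π k)) := by
        refine Finset.sum_congr rfl fun π _ => ?_; ring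
      rw [e1]
      calc _ ≤ 3 * α * (α * β * β) / ((N:ℝ) - 3) * Nat.factorial N := h
        _ = 3 * (α ^ 2 * β ^ 2) / ((N:ℝ) - 3) * Nat.factorial N := by ring
        _ ≤ _ := three_div_step hN _ hE

lemma iv_B4 {N : ℕ} (hN : 6 ≤ (N : ℝ)) (A B D : Matrix (Fin N) (Fin N) ℝ) (α β δ : ℝ)
    (hA1 : ∀ i, ∑ j, A i j = 0)
    (hAb : ∀ i j, |A i j| ≤ α) (hBb : ∀ i j, |B i j| ≤ β) (hDb : ∀ i j, |D i j| ≤ δ)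
    (i j k l : Fin N) (hij : i ≠ j) (hkl : k ≠ l) (hik : i ≠ k) (hil : i ≠ l) :
    |∑ π : Equiv.Perm (Fin N),
        (A i (π i) * B j (π j) * D i (π j)) * (A k (π k) * B l (π l) * D k (π l))|
      ≤ 6 * (α ^ 2 * β ^ 2 * δ ^ 2) / (N : ℝ) * Nat.factorial N := by
  have hα : 0 ≤ α := le_trans (abs_nonneg _) (hAb i i)
  have hβ : 0 ≤ β := le_trans (abs_nonneg _) (hBb i i)
  have hδ : 0 ≤ δ := le_trans (abs_nonneg _) (hDb i i)
  have h3 : 3 < (N : ℝ) := by linarith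
  have hE : (0:ℝ) ≤ α ^ 2 * β ^ 2 * δ ^ 2 := by positivity
  have h := cond3 h3 (fun v => A i v) (hA1 i) α (fun v => hAb i v)
    i j k l hij hik hil
    (fun a b c => B j a * D i a * (A k b * (B l c * D k c))) (β * δ * (α * (β * δ)))
    (fun a b c => abs_mul_le (abs_mul_le (hBb j a) (hDb i a))
      (abs_mul_le (hAb k b) (abs_mul_le (hBb l c) (hDb k c))))
  have e1 : ∑ π : Equiv.Perm (Fin N),
        (A i (π i) * B j (π j) * D i (π j)) * (A k (π k) * B l (π l) * D k (π l))
      = ∑ π : Equiv.Perm (Fin N),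
        A i (π i) * (B j (π j) * D i (π j) * (A k (π k) * (B l (π l) * D k (π l)))) := by
    refine Finset.sum_congr rfl fun π _ => ?_; ring
  rw [e1]
  calc _ ≤ 3 * α * (β * δ * (α * (β * δ))) / ((N:ℝ) - 3) * Nat.factorial N := h
    _ = 3 * (α ^ 2 * β ^ 2 * δ ^ 2) / ((N:ℝ) - 3) * Nat.factorial N := by ring
    _ ≤ _ := three_div_step hN _ hE

lemma v_B4 {N : ℕ} (hN : 6 ≤ (N : ℝ)) (A B D : Matrix (Fin N) (Fin N) ℝ) (α β δ : ℝ)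
    (hD1 : ∀ i, ∑ j, D i j = 0)
    (hAb : ∀ i j, |A i j| ≤ α) (hBb : ∀ i j, |B i j| ≤ β) (hDb : ∀ i j, |D i j| ≤ δ)
    (i j k l : Fin N) (hij : i ≠ j) (hjk : j ≠ k) (hjl : j ≠ l) :
    |∑ π : Equiv.Perm (Fin N),
        (A i (π i) * B j (π i) * D i (π j)) * (A k (π k) * B l (π k) * D k (π l))|
      ≤ 6 * (α ^ 2 * β ^ 2 * δ ^ 2) / (N : ℝ) * Nat.factorial N := by
  have hα : 0 ≤ α := le_trans (abs_nonneg _) (hAb i i)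
  have hβ : 0 ≤ β := le_trans (abs_nonneg _) (hBb i i)
  have hδ : 0 ≤ δ := le_trans (abs_nonneg _) (hDb i i)
  have h3 : 3 < (N : ℝ) := by linarith
  have hE : (0:ℝ) ≤ α ^ 2 * β ^ 2 * δ ^ 2 := by positivity
  have h := cond3 h3 (fun v => D i v) (hD1 i) δ (fun v => hDb i v)
    j i k l (Ne.symm hij) hjk hjl
    (fun a b c => A i a * B j a * (A k b * B l b * D k c)) (α * β * (α * β * δ))
    (fun a b c => abs_mul_le (abs_mul_le (hAb i a) (hBb j a))
      (abs_mul_le (abs_mul_le (hAb k b) (hBb l b)) (hDb k c)))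
  have e1 : ∑ π : Equiv.Perm (Fin N),
        (A i (π i) * B j (π i) * D i (π j)) * (A k (π k) * B l (π k) * D k (π l))
      = ∑ π : Equiv.Perm (Fin N),
        D i (π j) * (A i (π i) * B j (π i) * (A k (π k) * B l (π k) * D k (π l))) := by
    refine Finset.sum_congr rfl fun π _ => ?_; ring
  rw [e1]
  calc _ ≤ 3 * δ * (α * β * (α * β * δ)) / ((N:ℝ) - 3) * Nat.factorial N := h
    _ = 3 * (α ^ 2 * β ^ 2 * δ ^ 2) / ((N:ℝ) - 3) * Nat.factorial N := by ring
    _ ≤ _ := three_div_step hN _ hE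

lemma sq_expand1 {N : ℕ} {α : Type*} [Fintype α] (g : α → Equiv.Perm (Fin N) → ℝ) :
    ∑ π : Equiv.Perm (Fin N), (∑ i, g i π) ^ 2
      = ∑ p : α × α, ∑ π : Equiv.Perm (Fin N), g p.1 π * g p.2 π := by
  rw [Finset.sum_comm]
  refine Finset.sum_congr rfl fun π _ => ?_
  rw [sq, Finset.sum_mul_sum]
  rw [Fintype.sum_prod_type]

lemma sq_expand2 {N : ℕ} (e : Fin N → Fin N → Equiv.Perm (Fin N) → ℝ) :
    ∑ π : Equiv.Perm (Fin N), (∑ i, ∑ j, e i j π) ^ 2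
      = ∑ x : (Fin N × Fin N) × (Fin N × Fin N),
          ∑ π : Equiv.Perm (Fin N), e x.1.1 x.1.2 π * e x.2.1 x.2.2 π := by
  have h : ∀ π : Equiv.Perm (Fin N), (∑ i, ∑ j, e i j π) = ∑ p : Fin N × Fin N, e p.1 p.2 π := by
    intro π
    rw [Fintype.sum_prod_type]
  calc ∑ π : Equiv.Perm (Fin N), (∑ i, ∑ j, e i j π) ^ 2
      = ∑ π : Equiv.Perm (Fin N), (∑ p : Fin N × Fin N, e p.1 p.2 π) ^ 2 := by
        refine Finset.sum_congr rfl fun π _ => ?_; rw [h π]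
    _ = ∑ p : (Fin N × Fin N) × (Fin N × Fin N), ∑ π : Equiv.Perm (Fin N),
          e p.1.1 p.1.2 π * e p.2.1 p.2.2 π := sq_expand1 _

lemma tri_split {ι : Type*} [Fintype ι] (S : ι → ℝ) (P Q : ι → Prop)
    [DecidablePred P] [DecidablePred Q] (K2 K1 K0 : ℝ)
    (h2 : ∀ x, P x → |S x| ≤ K2)
    (h1 : ∀ x, ¬P x → Q x → |S x| ≤ K1)
    (h0 : ∀ x, ¬P x → ¬Q x → |S x| ≤ K0) :
    ∑ x, S x ≤ ((Finset.univ.filter P).card : ℝ) * K2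
      + ((Finset.univ.filter fun x => ¬P x ∧ Q x).card : ℝ) * K1
      + ((Finset.univ.filter fun x => ¬P x ∧ ¬Q x).card : ℝ) * K0 := by
  have habs : ∑ x, S x ≤ ∑ x, |S x| := Finset.sum_le_sum (fun x _ => le_abs_self _)
  refine le_trans habs ?_
  rw [← Finset.sum_filter_add_sum_filter_not Finset.univ P]
  have hsplit : (Finset.univ.filter fun x => ¬P x)
      = (Finset.univ.filter fun x => ¬P x ∧ Q x) ∪ (Finset.univ.filter fun x => ¬P x ∧ ¬Q x) := by
    ext x
    simp only [Finset.mem_filter, Finset.mem_union, Finset.mem_univ, true_and]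
    tauto
  have hdisj : Disjoint (Finset.univ.filter fun x => ¬P x ∧ Q x)
      (Finset.univ.filter fun x => ¬P x ∧ ¬Q x) := by
    rw [Finset.disjoint_left]
    intro x hx hx'
    simp only [Finset.mem_filter] at hx hx'
    exact hx'.2.2 hx.2.2
  rw [hsplit, Finset.sum_union hdisj]
  have b2 : ∑ x ∈ Finset.univ.filter P, |S x| ≤ ((Finset.univ.filter P).card : ℝ) * K2 := by
    refine le_trans (Finset.sum_le_card_nsmul _ _ K2 ?_) (by rw [nsmul_eq_mul])
    intro x hx; exact h2 x (Finset.mem_filter.mp hx).2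
  have b1 : ∑ x ∈ Finset.univ.filter (fun x => ¬P x ∧ Q x), |S x|
      ≤ ((Finset.univ.filter fun x => ¬P x ∧ Q x).card : ℝ) * K1 := by
    refine le_trans (Finset.sum_le_card_nsmul _ _ K1 ?_) (by rw [nsmul_eq_mul])
    intro x hx; have := (Finset.mem_filter.mp hx).2; exact h1 x this.1 this.2
  have b0 : ∑ x ∈ Finset.univ.filter (fun x => ¬P x ∧ ¬Q x), |S x|
      ≤ ((Finset.univ.filter fun x => ¬P x ∧ ¬Q x).card : ℝ) * K0 := by
    refine le_trans (Finset.sum_le_card_nsmul _ _ K0 ?_) (by rw [nsmul_eq_mul])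
    intro x hx; have := (Finset.mem_filter.mp hx).2; exact h0 x this.1 this.2
  linarith

lemma card_filter_le_of_surj {ι κ : Type*} [Fintype ι] [Fintype κ] [DecidableEq ι]
    (P : ι → Prop) [DecidablePred P] (e : κ → ι)
    (he : ∀ x, P x → ∃ y, e y = x) :
    (Finset.univ.filter P).card ≤ Fintype.card κ := by
  have hsub : Finset.univ.filter P ⊆ Finset.univ.image e := by
    intro x hx
    obtain ⟨y, hy⟩ := he x (Finset.mem_filter.mp hx).2
    exact Finset.mem_image.mpr ⟨y, Finset.mem_univ _, hy⟩
  calc (Finset.univ.filter P).card ≤ (Finset.univ.image e).card := Finset.card_le_card hsub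
    _ ≤ (Finset.univ : Finset κ).card := Finset.card_image_le
    _ = Fintype.card κ := Finset.card_univ

lemma card_univ4 (N : ℕ) :
    (Fintype.card ((Fin N × Fin N) × (Fin N × Fin N)) : ℝ) = (N : ℝ) ^ 4 := by
  simp [Fintype.card_prod, Fintype.card_fin]
  ring

lemma card_trip (N : ℕ) : Fintype.card (Fin N × Fin N × Fin N) = N ^ 3 := by
  simp [Fintype.card_prod, Fintype.card_fin]
  ring

lemma card_pair (N : ℕ) : Fintype.card (Fin N × Fin N) = N ^ 2 := by
  simp [Fintype.card_prod, Fintype.card_fin]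
  ring

lemma card_notC4_le (N : ℕ) :
    ((Finset.univ.filter fun x : (Fin N × Fin N) × (Fin N × Fin N) =>
      ¬(x.1.1 ≠ x.1.2 ∧ x.2.1 ≠ x.2.2 ∧ x.1.1 ≠ x.2.1 ∧ x.1.1 ≠ x.2.2
        ∧ x.1.2 ≠ x.2.1 ∧ x.1.2 ≠ x.2.2)).card) ≤ 6 * N ^ 3 := by
  classical
  set ι := (Fin N × Fin N) × (Fin N × Fin N)
  have hsub : (Finset.univ.filter fun x : ι =>
      ¬(x.1.1 ≠ x.1.2 ∧ x.2.1 ≠ x.2.2 ∧ x.1.1 ≠ x.2.1 ∧ x.1.1 ≠ x.2.2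
        ∧ x.1.2 ≠ x.2.1 ∧ x.1.2 ≠ x.2.2))
      ⊆ (Finset.univ.filter fun x : ι => x.1.1 = x.1.2)
        ∪ (Finset.univ.filter fun x : ι => x.2.1 = x.2.2)
        ∪ (Finset.univ.filter fun x : ι => x.1.1 = x.2.1)
        ∪ (Finset.univ.filter fun x : ι => x.1.1 = x.2.2)
        ∪ (Finset.univ.filter fun x : ι => x.1.2 = x.2.1)
        ∪ (Finset.univ.filter fun x : ι => x.1.2 = x.2.2) := by
    intro x hx
    simp only [Finset.mem_filter, Finset.mem_univ, true_and] at hx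
    simp only [Finset.mem_union, Finset.mem_filter, Finset.mem_univ, true_and]
    by_contra hcon
    push_neg at hcon
    exact hx ⟨hcon.1.1.1.1.1, hcon.1.1.1.1.2, hcon.1.1.1.2, hcon.1.1.2, hcon.1.2, hcon.2⟩
  have c1 : (Finset.univ.filter fun x : ι => x.1.1 = x.1.2).card ≤ N ^ 3 := by
    rw [← card_trip N]
    exact card_filter_le_of_surj _ (fun y => ((y.1, y.1), (y.2.1, y.2.2)))
      (fun x hx => ⟨(x.1.1, x.2.1, x.2.2), by
        obtain ⟨⟨a, b⟩, ⟨c, d⟩⟩ := x; simp only [] at hx; simp [hx]⟩)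
  have c2 : (Finset.univ.filter fun x : ι => x.2.1 = x.2.2).card ≤ N ^ 3 := by
    rw [← card_trip N]
    exact card_filter_le_of_surj _ (fun y => ((y.1, y.2.1), (y.2.2, y.2.2)))
      (fun x hx => ⟨(x.1.1, x.1.2, x.2.1), by
        obtain ⟨⟨a, b⟩, ⟨c, d⟩⟩ := x; simp only [] at hx; simp [hx]⟩)
  have c3 : (Finset.univ.filter fun x : ι => x.1.1 = x.2.1).card ≤ N ^ 3 := by
    rw [← card_trip N]
    exact card_filter_le_of_surj _ (fun y => ((y.1, y.2.1), (y.1, y.2.2)))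
      (fun x hx => ⟨(x.1.1, x.1.2, x.2.2), by
        obtain ⟨⟨a, b⟩, ⟨c, d⟩⟩ := x; simp only [] at hx; simp [hx.symm]⟩)
  have c4 : (Finset.univ.filter fun x : ι => x.1.1 = x.2.2).card ≤ N ^ 3 := by
    rw [← card_trip N]
    exact card_filter_le_of_surj _ (fun y => ((y.1, y.2.1), (y.2.2, y.1)))
      (fun x hx => ⟨(x.1.1, x.1.2, x.2.1), by
        obtain ⟨⟨a, b⟩, ⟨c, d⟩⟩ := x; simp only [] at hx; simp [hx.symm]⟩)
  have c5 : (Finset.univ.filter fun x : ι => x.1.2 = x.2.1).card ≤ N ^ 3 := by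
    rw [← card_trip N]
    exact card_filter_le_of_surj _ (fun y => ((y.1, y.2.1), (y.2.1, y.2.2)))
      (fun x hx => ⟨(x.1.1, x.1.2, x.2.2), by
        obtain ⟨⟨a, b⟩, ⟨c, d⟩⟩ := x; simp only [] at hx; simp [hx.symm]⟩)
  have c6 : (Finset.univ.filter fun x : ι => x.1.2 = x.2.2).card ≤ N ^ 3 := by
    rw [← card_trip N]
    exact card_filter_le_of_surj _ (fun y => ((y.1, y.2.1), (y.2.2, y.2.1)))
      (fun x hx => ⟨(x.1.1, x.1.2, x.2.1), by
        obtain ⟨⟨a, b⟩, ⟨c, d⟩⟩ := x; simp only [] at hx; simp [hx.symm]⟩)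
  refine le_trans (Finset.card_le_card hsub) ?_
  refine le_trans (Finset.card_union_le _ _) ?_
  refine le_trans (add_le_add_left (Finset.card_union_le _ _) _) ?_
  refine le_trans (add_le_add_left (add_le_add_left (Finset.card_union_le _ _) _) _) ?_
  refine le_trans (add_le_add_left (add_le_add_left (add_le_add_left
    (Finset.card_union_le _ _) _) _) _) ?_
  refine le_trans (add_le_add_left (add_le_add_left (add_le_add_left
    (add_le_add_left (Finset.card_union_le _ _) _) _) _) _) ?_
  linarith [c1, c2, c3, c4, c5, c6]

lemma card_C2_le (N : ℕ) :
    ((Finset.univ.filter fun x : (Fin N × Fin N) × (Fin N × Fin N) =>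
      (x.1.1 = x.2.1 ∧ x.1.2 = x.2.2) ∨ (x.1.1 = x.2.2 ∧ x.1.2 = x.2.1)).card) ≤ 2 * N ^ 2 := by
  classical
  set ι := (Fin N × Fin N) × (Fin N × Fin N)
  have hsub : (Finset.univ.filter fun x : ι =>
      (x.1.1 = x.2.1 ∧ x.1.2 = x.2.2) ∨ (x.1.1 = x.2.2 ∧ x.1.2 = x.2.1))
      ⊆ (Finset.univ.filter fun x : ι => x.1.1 = x.2.1 ∧ x.1.2 = x.2.2)
        ∪ (Finset.univ.filter fun x : ι => x.1.1 = x.2.2 ∧ x.1.2 = x.2.1) := by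
    intro x hx
    simp only [Finset.mem_filter, Finset.mem_univ, true_and] at hx
    simp only [Finset.mem_union, Finset.mem_filter, Finset.mem_univ, true_and]
    exact hx
  have c1 : (Finset.univ.filter fun x : ι => x.1.1 = x.2.1 ∧ x.1.2 = x.2.2).card ≤ N ^ 2 := by
    rw [← card_pair N]
    exact card_filter_le_of_surj _ (fun y => ((y.1, y.2), (y.1, y.2)))
      (fun x hx => ⟨(x.1.1, x.1.2), by
        obtain ⟨⟨a, b⟩, ⟨c, d⟩⟩ := x; simp only [] at hx; simp [hx.1.symm, hx.2.symm]⟩)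
  have c2 : (Finset.univ.filter fun x : ι => x.1.1 = x.2.2 ∧ x.1.2 = x.2.1).card ≤ N ^ 2 := by
    rw [← card_pair N]
    exact card_filter_le_of_surj _ (fun y => ((y.1, y.2), (y.2, y.1)))
      (fun x hx => ⟨(x.1.1, x.1.2), by
        obtain ⟨⟨a, b⟩, ⟨c, d⟩⟩ := x; simp only [] at hx; simp [hx.1.symm, hx.2.symm]⟩)
  calc _ ≤ _ := Finset.card_le_card hsub
    _ ≤ _ := Finset.card_union_le _ _
    _ ≤ 2 * N ^ 2 := by omega

lemma card_diag_le (N : ℕ) :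
    ((Finset.univ.filter fun p : Fin N × Fin N => p.1 = p.2).card) ≤ N := by
  classical
  have := card_filter_le_of_surj (κ := Fin N)
    (fun p : Fin N × Fin N => p.1 = p.2) (fun a => (a, a))
    (fun x hx => ⟨x.1, by obtain ⟨a, b⟩ := x; simp only [] at hx; simp [hx]⟩)
  simpa using this

lemma abs_ite_le {c : Prop} [Decidable c] {x b : ℝ} (hb : 0 ≤ b) (h : c → |x| ≤ b) :
    |if c then x else 0| ≤ b := by
  split_ifs with hc
  · exact h hc
  · simpa using hb

lemma abs_dsum_le {N : ℕ} (t : Fin N → Fin N → ℝ) (b : ℝ) (h : ∀ i j, |t i j| ≤ b) :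
    |∑ i, ∑ j, t i j| ≤ (N : ℝ) ^ 2 * b := by
  rcases Nat.eq_zero_or_pos N with h0 | h0
  · subst h0
    simp
  have hb : 0 ≤ b := le_trans (abs_nonneg _) (h ⟨0, h0⟩ ⟨0, h0⟩)
  calc |∑ i, ∑ j, t i j| ≤ ∑ i, |∑ j, t i j| := Finset.abs_sum_le_sum_abs _ _
    _ ≤ ∑ i : Fin N, ∑ j : Fin N, |t i j| :=
        Finset.sum_le_sum (fun i _ => Finset.abs_sum_le_sum_abs _ _)
    _ ≤ ∑ _i : Fin N, ∑ _j : Fin N, b :=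
        Finset.sum_le_sum (fun i _ => Finset.sum_le_sum (fun j _ => h i j))
    _ = (N : ℝ) ^ 2 * b := by
        simp [Finset.sum_const, nsmul_eq_mul]
        ring

lemma part_ii {N : ℕ} (hN2 : 2 ≤ N) (A B : Matrix (Fin N) (Fin N) ℝ) (α β : ℝ)
    (hA1 : ∀ i, ∑ j, A i j = 0) (hB1 : ∀ i, ∑ j, B i j = 0)
    (hAb : ∀ i j, |A i j| ≤ α) (hBb : ∀ i j, |B i j| ≤ β) :
    pvar (fun π => ∑ i, ∑ j, if i ≠ j then A i (π i) * B j (π j) else 0)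
      ≤ 1000 * (N : ℝ) ^ 2 * α ^ 2 * β ^ 2 := by
  have hz : (0 : ℕ) < N := by omega
  have hα : 0 ≤ α := le_trans (abs_nonneg _) (hAb ⟨0, hz⟩ ⟨0, hz⟩)
  have hβ : 0 ≤ β := le_trans (abs_nonneg _) (hBb ⟨0, hz⟩ ⟨0, hz⟩)
  have hNpos : (0:ℝ) < (N:ℝ) := by exact_mod_cast hz
  have hNne : (N:ℝ) ≠ 0 := ne_of_gt hNpos
  have hfac0 : (0:ℝ) ≤ (Nat.factorial N : ℝ) := le_of_lt (fac_pos_real N)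
  refine le_trans (pvar_le_pexp_sq _) (pexp_sq_le _ _ ?_)
  set e : Fin N → Fin N → Equiv.Perm (Fin N) → ℝ :=
    fun i j π => if i ≠ j then A i (π i) * B j (π j) else 0 with he
  have habs_e : ∀ (i j : Fin N) (π : Equiv.Perm (Fin N)), |e i j π| ≤ α * β := by
    intro i j π
    exact abs_ite_le (by positivity) (fun _ => abs_mul_le (hAb i (π i)) (hBb j (π j)))
  by_cases hN6 : 6 ≤ (N:ℝ)
  · rw [sq_expand2 e]
    set S : (Fin N × Fin N) × (Fin N × Fin N) → ℝ :=
      fun x => ∑ π : Equiv.Perm (Fin N), e x.1.1 x.1.2 π * e x.2.1 x.2.2 π with hSdef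
    have h2 : ∀ x, (x.1.1 ≠ x.1.2 ∧ x.2.1 ≠ x.2.2 ∧ x.1.1 ≠ x.2.1 ∧ x.1.1 ≠ x.2.2
        ∧ x.1.2 ≠ x.2.1 ∧ x.1.2 ≠ x.2.2) →
        |S x| ≤ 36 * (α ^ 2 * β ^ 2) / (N : ℝ) ^ 2 * Nat.factorial N := by
      rintro ⟨⟨i, j⟩, ⟨k, l⟩⟩ ⟨hij, hkl, hik, hil, hjk, hjl⟩
      have e1 : S ((i, j), (k, l)) = ∑ π : Equiv.Perm (Fin N),
          (A i (π i) * B j (π j)) * (A k (π k) * B l (π l)) := by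
        refine Finset.sum_congr rfl fun π _ => ?_
        simp only [hSdef, he, if_pos hij, if_pos hkl]
      rw [e1]
      exact ii_B4 hN6 A B α β hA1 hB1 hAb hBb i j k l hij hkl hik hil hjk hjl
    have h1 : ∀ x : (Fin N × Fin N) × (Fin N × Fin N), True →
        |S x| ≤ (Nat.factorial N : ℝ) * ((α * β) * (α * β)) :=
      fun x _ => triv_bound _ _ (fun π => abs_mul_le (habs_e _ _ π) (habs_e _ _ π))
    have h0 : ∀ x : (Fin N × Fin N) × (Fin N × Fin N),
        ¬((x.1.1 = x.2.1 ∧ x.1.2 = x.2.2) ∨ (x.1.1 = x.2.2 ∧ x.1.2 = x.2.1)) →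
        |S x| ≤ 6 * (α ^ 2 * β ^ 2) / (N : ℝ) * Nat.factorial N := by
      rintro ⟨⟨i, j⟩, ⟨k, l⟩⟩ hQ
      simp only [not_or, not_and] at hQ
      by_cases hij : i = j
      · have e1 : S ((i, j), (k, l)) = 0 := by
          refine Finset.sum_eq_zero fun π _ => ?_
          simp [hSdef, he, hij]
        rw [e1, abs_zero]
        positivity
      · by_cases hkl : k = l
        · have e1 : S ((i, j), (k, l)) = 0 := by
            refine Finset.sum_eq_zero fun π _ => ?_
            simp [hSdef, he, hkl]
          rw [e1, abs_zero]
          positivity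
        · have e1 : S ((i, j), (k, l)) = ∑ π : Equiv.Perm (Fin N),
              (A i (π i) * B j (π j)) * (A k (π k) * B l (π l)) := by
            refine Finset.sum_congr rfl fun π _ => ?_
            simp only [hSdef, he, if_pos hij, if_pos hkl]
          rw [e1]
          exact ii_B3 hN6 A B α β hA1 hB1 hAb hBb i j k l hij hkl
            (fun h => hQ.1 h.1 h.2) (fun h => hQ.2 h.1 h.2)
    -- apply tri_split with P := all-distinct, Q := C2-pattern
    have hts := tri_split S
      (fun x => x.1.1 ≠ x.1.2 ∧ x.2.1 ≠ x.2.2 ∧ x.1.1 ≠ x.2.1 ∧ x.1.1 ≠ x.2.2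
        ∧ x.1.2 ≠ x.2.1 ∧ x.1.2 ≠ x.2.2)
      (fun x => (x.1.1 = x.2.1 ∧ x.1.2 = x.2.2) ∨ (x.1.1 = x.2.2 ∧ x.1.2 = x.2.1))
      (36 * (α ^ 2 * β ^ 2) / (N : ℝ) ^ 2 * Nat.factorial N)
      ((Nat.factorial N : ℝ) * ((α * β) * (α * β)))
      (6 * (α ^ 2 * β ^ 2) / (N : ℝ) * Nat.factorial N)
      h2 (fun x _ _ => h1 x trivial) (fun x _ hq => h0 x hq)
    refine le_trans hts ?_
    -- card bounds
    have c2 : ((Finset.univ.filter (fun x : (Fin N × Fin N) × (Fin N × Fin N) =>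
        x.1.1 ≠ x.1.2 ∧ x.2.1 ≠ x.2.2 ∧ x.1.1 ≠ x.2.1 ∧ x.1.1 ≠ x.2.2
        ∧ x.1.2 ≠ x.2.1 ∧ x.1.2 ≠ x.2.2)).card : ℝ) ≤ (N:ℝ)^4 := by
      rw [← card_univ4 N]
      exact_mod_cast Nat.cast_le.mpr (le_trans (Finset.card_filter_le _ _)
        (le_of_eq Finset.card_univ))
    have c1 : ((Finset.univ.filter (fun x : (Fin N × Fin N) × (Fin N × Fin N) =>
        ¬(x.1.1 ≠ x.1.2 ∧ x.2.1 ≠ x.2.2 ∧ x.1.1 ≠ x.2.1 ∧ x.1.1 ≠ x.2.2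
          ∧ x.1.2 ≠ x.2.1 ∧ x.1.2 ≠ x.2.2)
        ∧ ((x.1.1 = x.2.1 ∧ x.1.2 = x.2.2) ∨ (x.1.1 = x.2.2 ∧ x.1.2 = x.2.1)))).card : ℝ)
        ≤ 2 * (N:ℝ)^2 := by
      have hsub := Finset.card_le_card (Finset.monotone_filter_right
        (s := (Finset.univ : Finset ((Fin N × Fin N) × (Fin N × Fin N))))
        (p := fun x => ¬(x.1.1 ≠ x.1.2 ∧ x.2.1 ≠ x.2.2 ∧ x.1.1 ≠ x.2.1 ∧ x.1.1 ≠ x.2.2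
          ∧ x.1.2 ≠ x.2.1 ∧ x.1.2 ≠ x.2.2)
          ∧ ((x.1.1 = x.2.1 ∧ x.1.2 = x.2.2) ∨ (x.1.1 = x.2.2 ∧ x.1.2 = x.2.1)))
        (q := fun x => (x.1.1 = x.2.1 ∧ x.1.2 = x.2.2) ∨ (x.1.1 = x.2.2 ∧ x.1.2 = x.2.1))
        (fun x _ hx => hx.2))
      have := le_trans hsub (card_C2_le N)
      calc _ ≤ ((2 * N^2 : ℕ) : ℝ) := Nat.cast_le.mpr this
        _ = 2 * (N:ℝ)^2 := by push_cast; ring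
    have c0 : ((Finset.univ.filter (fun x : (Fin N × Fin N) × (Fin N × Fin N) =>
        ¬(x.1.1 ≠ x.1.2 ∧ x.2.1 ≠ x.2.2 ∧ x.1.1 ≠ x.2.1 ∧ x.1.1 ≠ x.2.2
          ∧ x.1.2 ≠ x.2.1 ∧ x.1.2 ≠ x.2.2)
        ∧ ¬((x.1.1 = x.2.1 ∧ x.1.2 = x.2.2) ∨ (x.1.1 = x.2.2 ∧ x.1.2 = x.2.1)))).card : ℝ)
        ≤ 6 * (N:ℝ)^3 := by
      have hsub := Finset.card_le_card (Finset.monotone_filter_right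
        (s := (Finset.univ : Finset ((Fin N × Fin N) × (Fin N × Fin N))))
        (p := fun x => ¬(x.1.1 ≠ x.1.2 ∧ x.2.1 ≠ x.2.2 ∧ x.1.1 ≠ x.2.1 ∧ x.1.1 ≠ x.2.2
          ∧ x.1.2 ≠ x.2.1 ∧ x.1.2 ≠ x.2.2)
          ∧ ¬((x.1.1 = x.2.1 ∧ x.1.2 = x.2.2) ∨ (x.1.1 = x.2.2 ∧ x.1.2 = x.2.1)))
        (q := fun x => ¬(x.1.1 ≠ x.1.2 ∧ x.2.1 ≠ x.2.2 ∧ x.1.1 ≠ x.2.1 ∧ x.1.1 ≠ x.2.2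
          ∧ x.1.2 ≠ x.2.1 ∧ x.1.2 ≠ x.2.2))
        (fun x _ hx => hx.1))
      have := le_trans hsub (card_notC4_le N)
      calc _ ≤ ((6 * N^3 : ℕ) : ℝ) := Nat.cast_le.mpr this
        _ = 6 * (N:ℝ)^3 := by push_cast; ring
    have hK2 : (0:ℝ) ≤ 36 * (α ^ 2 * β ^ 2) / (N : ℝ) ^ 2 * Nat.factorial N := by positivity
    have hK1 : (0:ℝ) ≤ (Nat.factorial N : ℝ) * ((α * β) * (α * β)) := by positivity
    have hK0 : (0:ℝ) ≤ 6 * (α ^ 2 * β ^ 2) / (N : ℝ) * Nat.factorial N := by positivity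
    have m2 := mul_le_mul_of_nonneg_right c2 hK2
    have m1 := mul_le_mul_of_nonneg_right c1 hK1
    have m0 := mul_le_mul_of_nonneg_right c0 hK0
    have efinal : (N:ℝ)^4 * (36 * (α ^ 2 * β ^ 2) / (N : ℝ) ^ 2 * Nat.factorial N)
        + 2 * (N:ℝ)^2 * ((Nat.factorial N : ℝ) * ((α * β) * (α * β)))
        + 6 * (N:ℝ)^3 * (6 * (α ^ 2 * β ^ 2) / (N : ℝ) * Nat.factorial N)
        = (Nat.factorial N : ℝ) * (74 * (N:ℝ)^2 * α^2 * β^2) := by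
      field_simp
      ring
    have hle : (Nat.factorial N : ℝ) * (74 * (N:ℝ)^2 * α^2 * β^2)
        ≤ (Nat.factorial N : ℝ) * (1000 * (N : ℝ) ^ 2 * α ^ 2 * β ^ 2) := by
      refine mul_le_mul_of_nonneg_left ?_ hfac0
      nlinarith [sq_nonneg ((N:ℝ)*α*β)]
    linarith
  · -- small N : trivial bound
    push_neg at hN6
    have hf : ∀ π : Equiv.Perm (Fin N), |∑ i, ∑ j, e i j π| ≤ (N:ℝ)^2 * (α * β) :=
      fun π => abs_dsum_le _ _ (fun i j => habs_e i j π)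
    have hsq : ∀ π : Equiv.Perm (Fin N), (∑ i, ∑ j, e i j π)^2 ≤ ((N:ℝ)^2 * (α*β))^2 := by
      intro π
      rw [← sq_abs]
      exact pow_le_pow_left₀ (abs_nonneg _) (hf π) 2
    calc ∑ π : Equiv.Perm (Fin N), (∑ i, ∑ j, e i j π)^2
        ≤ ∑ _π : Equiv.Perm (Fin N), ((N:ℝ)^2 * (α*β))^2 :=
          Finset.sum_le_sum (fun π _ => hsq π)
      _ = (Nat.factorial N : ℝ) * ((N:ℝ)^2 * (α*β))^2 := by
          rw [Finset.sum_const, card_perm_real, nsmul_eq_mul]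
      _ ≤ (Nat.factorial N : ℝ) * (1000 * (N : ℝ) ^ 2 * α ^ 2 * β ^ 2) := by
          refine mul_le_mul_of_nonneg_left ?_ hfac0
          have h1 : ((N:ℝ)^2 * (α*β))^2 = (N:ℝ)^2 * α^2*β^2 * (N:ℝ)^2 := by ring
          rw [h1]
          have h2 : (N:ℝ)^2 ≤ 36 := by nlinarith
          nlinarith [mul_nonneg (mul_nonneg (sq_nonneg (N:ℝ)) (sq_nonneg α)) (sq_nonneg β)]

lemma part_iii {N : ℕ} (hN2 : 2 ≤ N) (A B : Matrix (Fin N) (Fin N) ℝ) (α β : ℝ)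
    (hA1 : ∀ i, ∑ j, A i j = 0) (hB1 : ∀ i, ∑ j, B i j = 0)
    (hAb : ∀ i j, |A i j| ≤ α) (hBb : ∀ i j, |B i j| ≤ β) :
    pvar (fun π => ∑ i, ∑ j, if i ≠ j then A i (π j) * B j (π i) else 0)
      ≤ 1000 * (N : ℝ) ^ 2 * α ^ 2 * β ^ 2 := by
  have hz : (0 : ℕ) < N := by omega
  have hα : 0 ≤ α := le_trans (abs_nonneg _) (hAb ⟨0, hz⟩ ⟨0, hz⟩)
  have hβ : 0 ≤ β := le_trans (abs_nonneg _) (hBb ⟨0, hz⟩ ⟨0, hz⟩)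
  have hNpos : (0:ℝ) < (N:ℝ) := by exact_mod_cast hz
  have hNne : (N:ℝ) ≠ 0 := ne_of_gt hNpos
  have hfac0 : (0:ℝ) ≤ (Nat.factorial N : ℝ) := le_of_lt (fac_pos_real N)
  refine le_trans (pvar_le_pexp_sq _) (pexp_sq_le _ _ ?_)
  set e : Fin N → Fin N → Equiv.Perm (Fin N) → ℝ :=
    fun i j π => if i ≠ j then A i (π j) * B j (π i) else 0 with he
  have habs_e : ∀ (i j : Fin N) (π : Equiv.Perm (Fin N)), |e i j π| ≤ α * β := by
    intro i j π
    exact abs_ite_le (by positivity) (fun _ => abs_mul_le (hAb i (π j)) (hBb j (π i)))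
  by_cases hN6 : 6 ≤ (N:ℝ)
  · rw [sq_expand2 e]
    set S : (Fin N × Fin N) × (Fin N × Fin N) → ℝ :=
      fun x => ∑ π : Equiv.Perm (Fin N), e x.1.1 x.1.2 π * e x.2.1 x.2.2 π with hSdef
    have h2 : ∀ x, (x.1.1 ≠ x.1.2 ∧ x.2.1 ≠ x.2.2 ∧ x.1.1 ≠ x.2.1 ∧ x.1.1 ≠ x.2.2
        ∧ x.1.2 ≠ x.2.1 ∧ x.1.2 ≠ x.2.2) →
        |S x| ≤ 36 * (α ^ 2 * β ^ 2) / (N : ℝ) ^ 2 * Nat.factorial N := by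
      rintro ⟨⟨i, j⟩, ⟨k, l⟩⟩ ⟨hij, hkl, hik, hil, hjk, hjl⟩
      have e1 : S ((i, j), (k, l)) = ∑ π : Equiv.Perm (Fin N),
          (A i (π j) * B j (π i)) * (A k (π l) * B l (π k)) := by
        refine Finset.sum_congr rfl fun π _ => ?_
        simp only [hSdef, he, if_pos hij, if_pos hkl]
      rw [e1]
      exact iii_B4 hN6 A B α β hA1 hB1 hAb hBb i j k l hij hkl hik hil hjk hjl
    have h1 : ∀ x : (Fin N × Fin N) × (Fin N × Fin N), True →
        |S x| ≤ (Nat.factorial N : ℝ) * ((α * β) * (α * β)) :=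
      fun x _ => triv_bound _ _ (fun π => abs_mul_le (habs_e _ _ π) (habs_e _ _ π))
    have h0 : ∀ x : (Fin N × Fin N) × (Fin N × Fin N),
        ¬((x.1.1 = x.2.1 ∧ x.1.2 = x.2.2) ∨ (x.1.1 = x.2.2 ∧ x.1.2 = x.2.1)) →
        |S x| ≤ 6 * (α ^ 2 * β ^ 2) / (N : ℝ) * Nat.factorial N := by
      rintro ⟨⟨i, j⟩, ⟨k, l⟩⟩ hQ
      simp only [not_or, not_and] at hQ
      by_cases hij : i = j
      · have e1 : S ((i, j), (k, l)) = 0 := by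
          refine Finset.sum_eq_zero fun π _ => ?_
          simp [hSdef, he, hij]
        rw [e1, abs_zero]
        positivity
      · by_cases hkl : k = l
        · have e1 : S ((i, j), (k, l)) = 0 := by
            refine Finset.sum_eq_zero fun π _ => ?_
            simp [hSdef, he, hkl]
          rw [e1, abs_zero]
          positivity
        · have e1 : S ((i, j), (k, l)) = ∑ π : Equiv.Perm (Fin N),
              (A i (π j) * B j (π i)) * (A k (π l) * B l (π k)) := by
            refine Finset.sum_congr rfl fun π _ => ?_
            simp only [hSdef, he, if_pos hij, if_pos hkl]
          rw [e1]
          exact iii_B3 hN6 A B α β hA1 hB1 hAb hBb i j k l hij hkl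
            (fun h => hQ.1 h.1 h.2) (fun h => hQ.2 h.1 h.2)
    -- apply tri_split with P := all-distinct, Q := C2-pattern
    have hts := tri_split S
      (fun x => x.1.1 ≠ x.1.2 ∧ x.2.1 ≠ x.2.2 ∧ x.1.1 ≠ x.2.1 ∧ x.1.1 ≠ x.2.2
        ∧ x.1.2 ≠ x.2.1 ∧ x.1.2 ≠ x.2.2)
      (fun x => (x.1.1 = x.2.1 ∧ x.1.2 = x.2.2) ∨ (x.1.1 = x.2.2 ∧ x.1.2 = x.2.1))
      (36 * (α ^ 2 * β ^ 2) / (N : ℝ) ^ 2 * Nat.factorial N)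
      ((Nat.factorial N : ℝ) * ((α * β) * (α * β)))
      (6 * (α ^ 2 * β ^ 2) / (N : ℝ) * Nat.factorial N)
      h2 (fun x _ _ => h1 x trivial) (fun x _ hq => h0 x hq)
    refine le_trans hts ?_
    -- card bounds
    have c2 : ((Finset.univ.filter (fun x : (Fin N × Fin N) × (Fin N × Fin N) =>
        x.1.1 ≠ x.1.2 ∧ x.2.1 ≠ x.2.2 ∧ x.1.1 ≠ x.2.1 ∧ x.1.1 ≠ x.2.2
        ∧ x.1.2 ≠ x.2.1 ∧ x.1.2 ≠ x.2.2)).card : ℝ) ≤ (N:ℝ)^4 := by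
      rw [← card_univ4 N]
      exact_mod_cast Nat.cast_le.mpr (le_trans (Finset.card_filter_le _ _)
        (le_of_eq Finset.card_univ))
    have c1 : ((Finset.univ.filter (fun x : (Fin N × Fin N) × (Fin N × Fin N) =>
        ¬(x.1.1 ≠ x.1.2 ∧ x.2.1 ≠ x.2.2 ∧ x.1.1 ≠ x.2.1 ∧ x.1.1 ≠ x.2.2
          ∧ x.1.2 ≠ x.2.1 ∧ x.1.2 ≠ x.2.2)
        ∧ ((x.1.1 = x.2.1 ∧ x.1.2 = x.2.2) ∨ (x.1.1 = x.2.2 ∧ x.1.2 = x.2.1)))).card : ℝ)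
        ≤ 2 * (N:ℝ)^2 := by
      have hsub := Finset.card_le_card (Finset.monotone_filter_right
        (s := (Finset.univ : Finset ((Fin N × Fin N) × (Fin N × Fin N))))
        (p := fun x => ¬(x.1.1 ≠ x.1.2 ∧ x.2.1 ≠ x.2.2 ∧ x.1.1 ≠ x.2.1 ∧ x.1.1 ≠ x.2.2
          ∧ x.1.2 ≠ x.2.1 ∧ x.1.2 ≠ x.2.2)
          ∧ ((x.1.1 = x.2.1 ∧ x.1.2 = x.2.2) ∨ (x.1.1 = x.2.2 ∧ x.1.2 = x.2.1)))
        (q := fun x => (x.1.1 = x.2.1 ∧ x.1.2 = x.2.2) ∨ (x.1.1 = x.2.2 ∧ x.1.2 = x.2.1))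
        (fun x _ hx => hx.2))
      have := le_trans hsub (card_C2_le N)
      calc _ ≤ ((2 * N^2 : ℕ) : ℝ) := Nat.cast_le.mpr this
        _ = 2 * (N:ℝ)^2 := by push_cast; ring
    have c0 : ((Finset.univ.filter (fun x : (Fin N × Fin N) × (Fin N × Fin N) =>
        ¬(x.1.1 ≠ x.1.2 ∧ x.2.1 ≠ x.2.2 ∧ x.1.1 ≠ x.2.1 ∧ x.1.1 ≠ x.2.2
          ∧ x.1.2 ≠ x.2.1 ∧ x.1.2 ≠ x.2.2)
        ∧ ¬((x.1.1 = x.2.1 ∧ x.1.2 = x.2.2) ∨ (x.1.1 = x.2.2 ∧ x.1.2 = x.2.1)))).card : ℝ)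
        ≤ 6 * (N:ℝ)^3 := by
      have hsub := Finset.card_le_card (Finset.monotone_filter_right
        (s := (Finset.univ : Finset ((Fin N × Fin N) × (Fin N × Fin N))))
        (p := fun x => ¬(x.1.1 ≠ x.1.2 ∧ x.2.1 ≠ x.2.2 ∧ x.1.1 ≠ x.2.1 ∧ x.1.1 ≠ x.2.2
          ∧ x.1.2 ≠ x.2.1 ∧ x.1.2 ≠ x.2.2)
          ∧ ¬((x.1.1 = x.2.1 ∧ x.1.2 = x.2.2) ∨ (x.1.1 = x.2.2 ∧ x.1.2 = x.2.1)))
        (q := fun x => ¬(x.1.1 ≠ x.1.2 ∧ x.2.1 ≠ x.2.2 ∧ x.1.1 ≠ x.2.1 ∧ x.1.1 ≠ x.2.2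
          ∧ x.1.2 ≠ x.2.1 ∧ x.1.2 ≠ x.2.2))
        (fun x _ hx => hx.1))
      have := le_trans hsub (card_notC4_le N)
      calc _ ≤ ((6 * N^3 : ℕ) : ℝ) := Nat.cast_le.mpr this
        _ = 6 * (N:ℝ)^3 := by push_cast; ring
    have hK2 : (0:ℝ) ≤ 36 * (α ^ 2 * β ^ 2) / (N : ℝ) ^ 2 * Nat.factorial N := by positivity
    have hK1 : (0:ℝ) ≤ (Nat.factorial N : ℝ) * ((α * β) * (α * β)) := by positivity
    have hK0 : (0:ℝ) ≤ 6 * (α ^ 2 * β ^ 2) / (N : ℝ) * Nat.factorial N := by positivity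
    have m2 := mul_le_mul_of_nonneg_right c2 hK2
    have m1 := mul_le_mul_of_nonneg_right c1 hK1
    have m0 := mul_le_mul_of_nonneg_right c0 hK0
    have efinal : (N:ℝ)^4 * (36 * (α ^ 2 * β ^ 2) / (N : ℝ) ^ 2 * Nat.factorial N)
        + 2 * (N:ℝ)^2 * ((Nat.factorial N : ℝ) * ((α * β) * (α * β)))
        + 6 * (N:ℝ)^3 * (6 * (α ^ 2 * β ^ 2) / (N : ℝ) * Nat.factorial N)
        = (Nat.factorial N : ℝ) * (74 * (N:ℝ)^2 * α^2 * β^2) := by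
      field_simp
      ring
    have hle : (Nat.factorial N : ℝ) * (74 * (N:ℝ)^2 * α^2 * β^2)
        ≤ (Nat.factorial N : ℝ) * (1000 * (N : ℝ) ^ 2 * α ^ 2 * β ^ 2) := by
      refine mul_le_mul_of_nonneg_left ?_ hfac0
      nlinarith [sq_nonneg ((N:ℝ)*α*β)]
    linarith
  · -- small N : trivial bound
    push_neg at hN6
    have hf : ∀ π : Equiv.Perm (Fin N), |∑ i, ∑ j, e i j π| ≤ (N:ℝ)^2 * (α * β) :=
      fun π => abs_dsum_le _ _ (fun i j => habs_e i j π)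
    have hsq : ∀ π : Equiv.Perm (Fin N), (∑ i, ∑ j, e i j π)^2 ≤ ((N:ℝ)^2 * (α*β))^2 := by
      intro π
      rw [← sq_abs]
      exact pow_le_pow_left₀ (abs_nonneg _) (hf π) 2
    calc ∑ π : Equiv.Perm (Fin N), (∑ i, ∑ j, e i j π)^2
        ≤ ∑ _π : Equiv.Perm (Fin N), ((N:ℝ)^2 * (α*β))^2 :=
          Finset.sum_le_sum (fun π _ => hsq π)
      _ = (Nat.factorial N : ℝ) * ((N:ℝ)^2 * (α*β))^2 := by
          rw [Finset.sum_const, card_perm_real, nsmul_eq_mul]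
      _ ≤ (Nat.factorial N : ℝ) * (1000 * (N : ℝ) ^ 2 * α ^ 2 * β ^ 2) := by
          refine mul_le_mul_of_nonneg_left ?_ hfac0
          have h1 : ((N:ℝ)^2 * (α*β))^2 = (N:ℝ)^2 * α^2*β^2 * (N:ℝ)^2 := by ring
          rw [h1]
          have h2 : (N:ℝ)^2 ≤ 36 := by nlinarith
          nlinarith [mul_nonneg (mul_nonneg (sq_nonneg (N:ℝ)) (sq_nonneg α)) (sq_nonneg β)]

lemma part_iv_v_common {N : ℕ} (hN2 : 2 ≤ N)
    (e : Fin N → Fin N → Equiv.Perm (Fin N) → ℝ) (E : ℝ) (hE : 0 ≤ E)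
    (habs_e : ∀ (i j : Fin N) (π : Equiv.Perm (Fin N)), |e i j π| ^ 2 ≤ E)
    (habs2 : ∀ (i j k l : Fin N) (π : Equiv.Perm (Fin N)),
      |e i j π * e k l π| ≤ E)
    (hB4 : (6:ℝ) ≤ (N:ℝ) → ∀ i j k l : Fin N,
      i ≠ j → k ≠ l → i ≠ k → i ≠ l → j ≠ k → j ≠ l →
      |∑ π : Equiv.Perm (Fin N), e i j π * e k l π|
        ≤ 6 * E / (N : ℝ) * Nat.factorial N) :
    ∑ π : Equiv.Perm (Fin N), (∑ i, ∑ j, e i j π) ^ 2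
      ≤ (Nat.factorial N : ℝ) * (1000 * (N : ℝ) ^ 3 * E) := by
  have hz : (0 : ℕ) < N := by omega
  have hNpos : (0:ℝ) < (N:ℝ) := by exact_mod_cast hz
  have hNne : (N:ℝ) ≠ 0 := ne_of_gt hNpos
  have hfac0 : (0:ℝ) ≤ (Nat.factorial N : ℝ) := le_of_lt (fac_pos_real N)
  by_cases hN6 : 6 ≤ (N:ℝ)
  · rw [sq_expand2 e]
    set S : (Fin N × Fin N) × (Fin N × Fin N) → ℝ :=
      fun x => ∑ π : Equiv.Perm (Fin N), e x.1.1 x.1.2 π * e x.2.1 x.2.2 π with hSdef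
    have h2 : ∀ x, (x.1.1 ≠ x.1.2 ∧ x.2.1 ≠ x.2.2 ∧ x.1.1 ≠ x.2.1 ∧ x.1.1 ≠ x.2.2
        ∧ x.1.2 ≠ x.2.1 ∧ x.1.2 ≠ x.2.2) →
        |S x| ≤ 6 * E / (N : ℝ) * Nat.factorial N := by
      rintro ⟨⟨i, j⟩, ⟨k, l⟩⟩ ⟨hij, hkl, hik, hil, hjk, hjl⟩
      exact hB4 hN6 i j k l hij hkl hik hil hjk hjl
    have h1 : ∀ x : (Fin N × Fin N) × (Fin N × Fin N), True →
        |S x| ≤ (Nat.factorial N : ℝ) * E :=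
      fun x _ => triv_bound _ _ (fun π => habs2 _ _ _ _ π)
    have hts := tri_split S
      (fun x => x.1.1 ≠ x.1.2 ∧ x.2.1 ≠ x.2.2 ∧ x.1.1 ≠ x.2.1 ∧ x.1.1 ≠ x.2.2
        ∧ x.1.2 ≠ x.2.1 ∧ x.1.2 ≠ x.2.2)
      (fun _ => True)
      (6 * E / (N : ℝ) * Nat.factorial N)
      ((Nat.factorial N : ℝ) * E) 0
      h2 (fun x _ _ => h1 x trivial) (fun x _ h => absurd trivial h)
    refine le_trans hts ?_
    have c2 : ((Finset.univ.filter (fun x : (Fin N × Fin N) × (Fin N × Fin N) =>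
        x.1.1 ≠ x.1.2 ∧ x.2.1 ≠ x.2.2 ∧ x.1.1 ≠ x.2.1 ∧ x.1.1 ≠ x.2.2
        ∧ x.1.2 ≠ x.2.1 ∧ x.1.2 ≠ x.2.2)).card : ℝ) ≤ (N:ℝ)^4 := by
      rw [← card_univ4 N]
      exact_mod_cast Nat.cast_le.mpr (le_trans (Finset.card_filter_le _ _)
        (le_of_eq Finset.card_univ))
    have c1 : ((Finset.univ.filter (fun x : (Fin N × Fin N) × (Fin N × Fin N) =>
        ¬(x.1.1 ≠ x.1.2 ∧ x.2.1 ≠ x.2.2 ∧ x.1.1 ≠ x.2.1 ∧ x.1.1 ≠ x.2.2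
          ∧ x.1.2 ≠ x.2.1 ∧ x.1.2 ≠ x.2.2) ∧ True)).card : ℝ)
        ≤ 6 * (N:ℝ)^3 := by
      have hsub := Finset.card_le_card (Finset.monotone_filter_right
        (s := (Finset.univ : Finset ((Fin N × Fin N) × (Fin N × Fin N))))
        (p := fun x => ¬(x.1.1 ≠ x.1.2 ∧ x.2.1 ≠ x.2.2 ∧ x.1.1 ≠ x.2.1 ∧ x.1.1 ≠ x.2.2
          ∧ x.1.2 ≠ x.2.1 ∧ x.1.2 ≠ x.2.2) ∧ True)
        (q := fun x => ¬(x.1.1 ≠ x.1.2 ∧ x.2.1 ≠ x.2.2 ∧ x.1.1 ≠ x.2.1 ∧ x.1.1 ≠ x.2.2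
          ∧ x.1.2 ≠ x.2.1 ∧ x.1.2 ≠ x.2.2))
        (fun x _ hx => hx.1))
      have := le_trans hsub (card_notC4_le N)
      calc _ ≤ ((6 * N^3 : ℕ) : ℝ) := Nat.cast_le.mpr this
        _ = 6 * (N:ℝ)^3 := by push_cast; ring
    have hK2 : (0:ℝ) ≤ 6 * E / (N : ℝ) * Nat.factorial N := by positivity
    have hK1 : (0:ℝ) ≤ (Nat.factorial N : ℝ) * E := by positivity
    have m2 := mul_le_mul_of_nonneg_right c2 hK2
    have m1 := mul_le_mul_of_nonneg_right c1 hK1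
    have efinal : (N:ℝ)^4 * (6 * E / (N : ℝ) * Nat.factorial N)
        + 6 * (N:ℝ)^3 * ((Nat.factorial N : ℝ) * E)
        = (Nat.factorial N : ℝ) * (12 * (N:ℝ)^3 * E) := by
      field_simp
      ring
    have hle : (Nat.factorial N : ℝ) * (12 * (N:ℝ)^3 * E)
        ≤ (Nat.factorial N : ℝ) * (1000 * (N : ℝ) ^ 3 * E) := by
      refine mul_le_mul_of_nonneg_left ?_ hfac0
      nlinarith [mul_nonneg (pow_nonneg (le_of_lt hNpos) 3) hE]
    have hzero : (((Finset.univ.filter (fun x : (Fin N × Fin N) × (Fin N × Fin N) =>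
        ¬(x.1.1 ≠ x.1.2 ∧ x.2.1 ≠ x.2.2 ∧ x.1.1 ≠ x.2.1 ∧ x.1.1 ≠ x.2.2
          ∧ x.1.2 ≠ x.2.1 ∧ x.1.2 ≠ x.2.2) ∧ ¬True)).card : ℝ)) * (0:ℝ) = 0 := by ring
    linarith
  · push_neg at hN6
    have hEsq : ∀ i j (π : Equiv.Perm (Fin N)), |e i j π| ≤ Real.sqrt E := by
      intro i j π
      have := habs_e i j π
      nlinarith [Real.sq_sqrt hE, Real.sqrt_nonneg E, abs_nonneg (e i j π),
        sq_nonneg (|e i j π| - Real.sqrt E)]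
    have hf : ∀ π : Equiv.Perm (Fin N), |∑ i, ∑ j, e i j π| ≤ (N:ℝ)^2 * Real.sqrt E :=
      fun π => abs_dsum_le _ _ (fun i j => hEsq i j π)
    have hsq : ∀ π : Equiv.Perm (Fin N), (∑ i, ∑ j, e i j π)^2 ≤ ((N:ℝ)^2 * Real.sqrt E)^2 := by
      intro π
      rw [← sq_abs]
      exact pow_le_pow_left₀ (abs_nonneg _) (hf π) 2
    calc ∑ π : Equiv.Perm (Fin N), (∑ i, ∑ j, e i j π)^2
        ≤ ∑ _π : Equiv.Perm (Fin N), ((N:ℝ)^2 * Real.sqrt E)^2 :=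
          Finset.sum_le_sum (fun π _ => hsq π)
      _ = (Nat.factorial N : ℝ) * ((N:ℝ)^2 * Real.sqrt E)^2 := by
          rw [Finset.sum_const, card_perm_real, nsmul_eq_mul]
      _ ≤ (Nat.factorial N : ℝ) * (1000 * (N : ℝ) ^ 3 * E) := by
          refine mul_le_mul_of_nonneg_left ?_ hfac0
          have h1 : ((N:ℝ)^2 * Real.sqrt E)^2 = (N:ℝ)^4 * E := by
            rw [mul_pow, Real.sq_sqrt hE]
            ring
          rw [h1]
          nlinarith [mul_nonneg (pow_nonneg (le_of_lt hNpos) 3) hE,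
            mul_nonneg (mul_nonneg (pow_nonneg (le_of_lt hNpos) 3) hE)
              (show (0:ℝ) ≤ 6 - (N:ℝ) by linarith)]

lemma part_iv {N : ℕ} (hN2 : 2 ≤ N) (A B D : Matrix (Fin N) (Fin N) ℝ) (α β δ : ℝ)
    (hA1 : ∀ i, ∑ j, A i j = 0)
    (hAb : ∀ i j, |A i j| ≤ α) (hBb : ∀ i j, |B i j| ≤ β) (hDb : ∀ i j, |D i j| ≤ δ) :
    pvar (fun π => ∑ i, ∑ j, if i ≠ j then A i (π i) * B j (π j) * D i (π j) else 0)
      ≤ 1000 * (N : ℝ) ^ 3 * α ^ 2 * β ^ 2 * δ ^ 2 := by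
  have hz : (0 : ℕ) < N := by omega
  have hα : 0 ≤ α := le_trans (abs_nonneg _) (hAb ⟨0, hz⟩ ⟨0, hz⟩)
  have hβ : 0 ≤ β := le_trans (abs_nonneg _) (hBb ⟨0, hz⟩ ⟨0, hz⟩)
  have hδ : 0 ≤ δ := le_trans (abs_nonneg _) (hDb ⟨0, hz⟩ ⟨0, hz⟩)
  set e : Fin N → Fin N → Equiv.Perm (Fin N) → ℝ :=
    fun i j π => if i ≠ j then A i (π i) * B j (π j) * D i (π j) else 0 with he
  have habs : ∀ (i j : Fin N) (π : Equiv.Perm (Fin N)), |e i j π| ≤ α * β * δ := by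
    intro i j π
    exact abs_ite_le (by positivity)
      (fun _ => abs_mul_le (abs_mul_le (hAb i (π i)) (hBb j (π j))) (hDb i (π j)))
  have hcom := part_iv_v_common hN2 e (α ^ 2 * β ^ 2 * δ ^ 2) (by positivity)
    (by
      intro i j π
      have h := pow_le_pow_left₀ (abs_nonneg _) (habs i j π) 2
      calc |e i j π| ^ 2 ≤ (α * β * δ) ^ 2 := h
        _ = α ^ 2 * β ^ 2 * δ ^ 2 := by ring)
    (by
      intro i j k l π
      calc |e i j π * e k l π| ≤ (α * β * δ) * (α * β * δ) :=
            abs_mul_le (habs i j π) (habs k l π)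
        _ = α ^ 2 * β ^ 2 * δ ^ 2 := by ring)
    (by
      intro hN6 i j k l hij hkl hik hil hjk hjl
      have e1 : ∑ π : Equiv.Perm (Fin N), e i j π * e k l π
          = ∑ π : Equiv.Perm (Fin N),
            (A i (π i) * B j (π j) * D i (π j)) * (A k (π k) * B l (π l) * D k (π l)) := by
        refine Finset.sum_congr rfl fun π _ => ?_
        simp only [he, if_pos hij, if_pos hkl]
      rw [e1]
      exact iv_B4 hN6 A B D α β δ hA1 hAb hBb hDb i j k l hij hkl hik hil)
  have := le_trans (pvar_le_pexp_sq _) (pexp_sq_le _ _ hcom)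
  calc _ ≤ 1000 * (N : ℝ) ^ 3 * (α ^ 2 * β ^ 2 * δ ^ 2) := this
    _ = 1000 * (N : ℝ) ^ 3 * α ^ 2 * β ^ 2 * δ ^ 2 := by ring

lemma part_v {N : ℕ} (hN2 : 2 ≤ N) (A B D : Matrix (Fin N) (Fin N) ℝ) (α β δ : ℝ)
    (hD1 : ∀ i, ∑ j, D i j = 0)
    (hAb : ∀ i j, |A i j| ≤ α) (hBb : ∀ i j, |B i j| ≤ β) (hDb : ∀ i j, |D i j| ≤ δ) :
    pvar (fun π => ∑ i, ∑ j, if i ≠ j then A i (π i) * B j (π i) * D i (π j) else 0)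
      ≤ 1000 * (N : ℝ) ^ 3 * α ^ 2 * β ^ 2 * δ ^ 2 := by
  have hz : (0 : ℕ) < N := by omega
  have hα : 0 ≤ α := le_trans (abs_nonneg _) (hAb ⟨0, hz⟩ ⟨0, hz⟩)
  have hβ : 0 ≤ β := le_trans (abs_nonneg _) (hBb ⟨0, hz⟩ ⟨0, hz⟩)
  have hδ : 0 ≤ δ := le_trans (abs_nonneg _) (hDb ⟨0, hz⟩ ⟨0, hz⟩)
  set e : Fin N → Fin N → Equiv.Perm (Fin N) → ℝ :=
    fun i j π => if i ≠ j then A i (π i) * B j (π i) * D i (π j) else 0 with he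
  have habs : ∀ (i j : Fin N) (π : Equiv.Perm (Fin N)), |e i j π| ≤ α * β * δ := by
    intro i j π
    exact abs_ite_le (by positivity)
      (fun _ => abs_mul_le (abs_mul_le (hAb i (π i)) (hBb j (π i))) (hDb i (π j)))
  have hcom := part_iv_v_common hN2 e (α ^ 2 * β ^ 2 * δ ^ 2) (by positivity)
    (by
      intro i j π
      have h := pow_le_pow_left₀ (abs_nonneg _) (habs i j π) 2
      calc |e i j π| ^ 2 ≤ (α * β * δ) ^ 2 := h
        _ = α ^ 2 * β ^ 2 * δ ^ 2 := by ring)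
    (by
      intro i j k l π
      calc |e i j π * e k l π| ≤ (α * β * δ) * (α * β * δ) :=
            abs_mul_le (habs i j π) (habs k l π)
        _ = α ^ 2 * β ^ 2 * δ ^ 2 := by ring)
    (by
      intro hN6 i j k l hij hkl hik hil hjk hjl
      have e1 : ∑ π : Equiv.Perm (Fin N), e i j π * e k l π
          = ∑ π : Equiv.Perm (Fin N),
            (A i (π i) * B j (π i) * D i (π j)) * (A k (π k) * B l (π k) * D k (π l)) := by
        refine Finset.sum_congr rfl fun π _ => ?_
        simp only [he, if_pos hij, if_pos hkl]
      rw [e1]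
      exact v_B4 hN6 A B D α β δ hD1 hAb hBb hDb i j k l hij hjk hjl)
  have := le_trans (pvar_le_pexp_sq _) (pexp_sq_le _ _ hcom)
  calc _ ≤ 1000 * (N : ℝ) ^ 3 * (α ^ 2 * β ^ 2 * δ ^ 2) := this
    _ = 1000 * (N : ℝ) ^ 3 * α ^ 2 * β ^ 2 * δ ^ 2 := by ring

lemma part_i {N : ℕ} (hN2 : 2 ≤ N) (M : Matrix (Fin N) (Fin N) ℝ) (B₀ : ℝ)
    (hM : ∀ i j, |M i j| ≤ B₀) :
    pvar (fun π => ∑ i, M i (π i)) ≤ 1000 * (N : ℝ) * B₀ ^ 2 := by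
  have hz : (0 : ℕ) < N := by omega
  have hB0 : 0 ≤ B₀ := le_trans (abs_nonneg _) (hM ⟨0, hz⟩ ⟨0, hz⟩)
  have hNpos : (0:ℝ) < (N:ℝ) := by exact_mod_cast hz
  have hNne : (N:ℝ) ≠ 0 := ne_of_gt hNpos
  have hN1 : (1:ℝ) < (N:ℝ) := by
    have : (2:ℝ) ≤ (N:ℝ) := by exact_mod_cast hN2
    linarith
  have hfac0 : (0:ℝ) ≤ (Nat.factorial N : ℝ) := le_of_lt (fac_pos_real N)
  set r : Fin N → ℝ := fun i => ∑ j, M i j with hr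
  set c : Fin N → ℝ := fun j => ∑ i, M i j with hc
  set s : ℝ := ∑ i, ∑ j, M i j with hs
  set Mt : Fin N → Fin N → ℝ :=
    fun i j => M i j - r i / N - c j / N + s / (N:ℝ)^2 with hMt
  have hcs : ∑ j, c j = s := by
    rw [hs]
    exact Finset.sum_comm
  have hrs : ∑ i, r i = s := rfl
  have hrow : ∀ i, ∑ j, Mt i j = 0 := by
    intro i
    have : ∑ j, Mt i j
        = (∑ j, M i j) - (N:ℝ) * (r i / N) - (∑ j, c j) / N + (N:ℝ) * (s / (N:ℝ)^2) := by
      rw [Finset.sum_add_distrib, Finset.sum_sub_distrib, Finset.sum_sub_distrib,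
        Finset.sum_const, ← Finset.sum_div, Finset.sum_const]
      simp [Finset.card_univ, Fintype.card_fin, nsmul_eq_mul]
    rw [this, hcs]
    field_simp
    ring
  have hrb : ∀ i, |r i| ≤ (N:ℝ) * B₀ := by
    intro i
    calc |r i| ≤ ∑ j, |M i j| := Finset.abs_sum_le_sum_abs _ _
      _ ≤ ∑ _j : Fin N, B₀ := Finset.sum_le_sum (fun j _ => hM i j)
      _ = (N:ℝ) * B₀ := by simp [Finset.sum_const, Finset.card_univ, nsmul_eq_mul]
  have hcb : ∀ j, |c j| ≤ (N:ℝ) * B₀ := by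
    intro j
    calc |c j| ≤ ∑ i, |M i j| := Finset.abs_sum_le_sum_abs _ _
      _ ≤ ∑ _i : Fin N, B₀ := Finset.sum_le_sum (fun i _ => hM i j)
      _ = (N:ℝ) * B₀ := by simp [Finset.sum_const, Finset.card_univ, nsmul_eq_mul]
  have hsb : |s| ≤ (N:ℝ)^2 * B₀ := by
    calc |s| ≤ ∑ i, |r i| := Finset.abs_sum_le_sum_abs _ _
      _ ≤ ∑ _i : Fin N, (N:ℝ) * B₀ := Finset.sum_le_sum (fun i _ => hrb i)
      _ = (N:ℝ)^2 * B₀ := by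
          simp [Finset.sum_const, Finset.card_univ, nsmul_eq_mul]
          ring
  have hMtb : ∀ i j, |Mt i j| ≤ 4 * B₀ := by
    intro i j
    have h1 : |r i / N| ≤ B₀ := by
      rw [abs_div, abs_of_pos hNpos, div_le_iff₀ hNpos]
      calc |r i| ≤ (N:ℝ) * B₀ := hrb i
        _ = B₀ * N := by ring
    have h2 : |c j / N| ≤ B₀ := by
      rw [abs_div, abs_of_pos hNpos, div_le_iff₀ hNpos]
      calc |c j| ≤ (N:ℝ) * B₀ := hcb j
        _ = B₀ * N := by ring
    have h3 : |s / (N:ℝ)^2| ≤ B₀ := by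
      rw [abs_div, abs_of_pos (by positivity : (0:ℝ) < (N:ℝ)^2),
        div_le_iff₀ (by positivity : (0:ℝ) < (N:ℝ)^2)]
      calc |s| ≤ (N:ℝ)^2 * B₀ := hsb
        _ = B₀ * (N:ℝ)^2 := by ring
    have e1 : Mt i j = M i j + (-(r i / N)) + (-(c j / N)) + s / (N:ℝ)^2 := by
      rw [hMt]; ring
    rw [e1]
    calc |M i j + (-(r i / N)) + (-(c j / N)) + s / (N:ℝ)^2|
        ≤ |M i j + (-(r i / N)) + (-(c j / N))| + |s / (N:ℝ)^2| := abs_add_le _ _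
      _ ≤ (|M i j + (-(r i / N))| + |(-(c j / N))|) + |s / (N:ℝ)^2| := by
          exact add_le_add_left (abs_add_le _ _) _
      _ ≤ ((|M i j| + |(-(r i / N))|) + |(-(c j / N))|) + |s / (N:ℝ)^2| := by
          exact add_le_add_left (add_le_add_left (abs_add_le _ _) _) _
      _ ≤ ((B₀ + B₀) + B₀) + B₀ := by
          rw [abs_neg, abs_neg]
          exact add_le_add (add_le_add (add_le_add (hM i j) h1) h2) h3
      _ = 4 * B₀ := by ring
  have hshift : (fun π : Equiv.Perm (Fin N) => ∑ i, M i (π i))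
      = (fun π : Equiv.Perm (Fin N) => (∑ i, Mt i (π i)) + s / N) := by
    funext π
    have h1 : ∑ i, Mt i (π i)
        = (∑ i, M i (π i)) - (∑ i, r i) / N - (∑ i, c (π i)) / N
          + (N:ℝ) * (s / (N:ℝ)^2) := by
      rw [hMt]
      rw [Finset.sum_add_distrib, Finset.sum_sub_distrib, Finset.sum_sub_distrib,
        ← Finset.sum_div, ← Finset.sum_div, Finset.sum_const]
      simp [Finset.card_univ, Fintype.card_fin, nsmul_eq_mul]
    have h2 : ∑ i, c (π i) = s := by
      rw [Equiv.sum_comp π c]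
      exact hcs
    rw [h1, h2, hrs]
    field_simp
    ring
  rw [hshift, pvar_add_const]
  refine le_trans (pvar_le_pexp_sq _) (pexp_sq_le _ _ ?_)
  rw [sq_expand1 (fun i π => Mt i (π i))]
  set S : Fin N × Fin N → ℝ :=
    fun p => ∑ π : Equiv.Perm (Fin N), Mt p.1 (π p.1) * Mt p.2 (π p.2) with hSdef
  have h2 : ∀ p : Fin N × Fin N, p.1 ≠ p.2 →
      |S p| ≤ 4 * B₀ * (4 * B₀) / ((N:ℝ) - 1) * Nat.factorial N := by
    rintro ⟨i, k⟩ hik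
    exact cond1 hN1 (fun v => Mt i v) (hrow i) (4 * B₀) (fun v => hMtb i v)
      i k hik (fun a => Mt k a) (4 * B₀) (fun a => hMtb k a)
  have h1 : ∀ p : Fin N × Fin N, True →
      |S p| ≤ (Nat.factorial N : ℝ) * (4 * B₀ * (4 * B₀)) :=
    fun p _ => triv_bound _ _ (fun π => abs_mul_le (hMtb _ _) (hMtb _ _))
  have hts := tri_split S (fun p => p.1 ≠ p.2) (fun _ => True)
    (4 * B₀ * (4 * B₀) / ((N:ℝ) - 1) * Nat.factorial N)
    ((Nat.factorial N : ℝ) * (4 * B₀ * (4 * B₀))) 0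
    h2 (fun p _ _ => h1 p trivial) (fun p _ h => absurd trivial h)
  refine le_trans hts ?_
  have c2 : ((Finset.univ.filter (fun p : Fin N × Fin N => p.1 ≠ p.2)).card : ℝ)
      ≤ (N:ℝ)^2 := by
    have h := Finset.card_filter_le (Finset.univ : Finset (Fin N × Fin N))
      (fun p : Fin N × Fin N => p.1 ≠ p.2)
    have h2' : (Finset.univ : Finset (Fin N × Fin N)).card = N ^ 2 := by
      rw [Finset.card_univ, card_pair]
    rw [h2'] at h
    calc _ ≤ ((N^2 : ℕ) : ℝ) := Nat.cast_le.mpr h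
      _ = (N:ℝ)^2 := by push_cast; ring
  have c1 : ((Finset.univ.filter (fun p : Fin N × Fin N => ¬p.1 ≠ p.2 ∧ True)).card : ℝ)
      ≤ (N:ℝ) := by
    have hsub := Finset.card_le_card (Finset.monotone_filter_right
      (s := (Finset.univ : Finset (Fin N × Fin N)))
      (p := fun p => ¬p.1 ≠ p.2 ∧ True) (q := fun p => p.1 = p.2)
      (fun p _ hp => not_not.mp hp.1))
    have := le_trans hsub (card_diag_le N)
    exact_mod_cast Nat.cast_le.mpr this
  have hK2 : (0:ℝ) ≤ 4 * B₀ * (4 * B₀) / ((N:ℝ) - 1) * Nat.factorial N := by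
    have : (0:ℝ) < (N:ℝ) - 1 := by linarith
    positivity
  have hK1 : (0:ℝ) ≤ (Nat.factorial N : ℝ) * (4 * B₀ * (4 * B₀)) := by positivity
  have m2 := mul_le_mul_of_nonneg_right c2 hK2
  have m1 := mul_le_mul_of_nonneg_right c1 hK1
  have hstep : (N:ℝ)^2 * (4 * B₀ * (4 * B₀) / ((N:ℝ) - 1) * Nat.factorial N)
      ≤ (Nat.factorial N : ℝ) * (32 * (N:ℝ) * B₀^2) := by
    have hpos1 : (0:ℝ) < (N:ℝ) - 1 := by linarith
    rw [div_mul_eq_mul_div, ← mul_div_assoc, div_le_iff₀ hpos1]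
    have key : (0:ℝ) ≤ 16 * B₀^2 * (Nat.factorial N : ℝ) * (N:ℝ) * ((N:ℝ) - 2) :=
      mul_nonneg (mul_nonneg (mul_nonneg (by positivity) hfac0) (le_of_lt hNpos))
        (by exact_mod_cast sub_nonneg.mpr (show (2:ℝ) ≤ (N:ℝ) by exact_mod_cast hN2))
    have expand : (Nat.factorial N : ℝ) * (32 * (N:ℝ) * B₀^2) * ((N:ℝ) - 1)
        - (N:ℝ)^2 * (4 * B₀ * (4 * B₀)) * (Nat.factorial N : ℝ)
        = 16 * B₀^2 * (Nat.factorial N : ℝ) * (N:ℝ) * ((N:ℝ) - 2) := by ring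
    linarith [key, expand]
  have hstep1 : (N:ℝ) * ((Nat.factorial N : ℝ) * (4 * B₀ * (4 * B₀)))
      = (Nat.factorial N : ℝ) * (16 * (N:ℝ) * B₀^2) := by ring
  have hfin : (Nat.factorial N : ℝ) * (32 * (N:ℝ) * B₀^2)
      + (Nat.factorial N : ℝ) * (16 * (N:ℝ) * B₀^2)
      ≤ (Nat.factorial N : ℝ) * (1000 * (N : ℝ) * B₀ ^ 2) := by
    have e48 : (Nat.factorial N : ℝ) * (32 * (N:ℝ) * B₀^2)
        + (Nat.factorial N : ℝ) * (16 * (N:ℝ) * B₀^2)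
        = (Nat.factorial N : ℝ) * (48 * (N:ℝ) * B₀^2) := by ring
    rw [e48]
    refine mul_le_mul_of_nonneg_left ?_ hfac0
    nlinarith [mul_nonneg (le_of_lt hNpos) (sq_nonneg B₀)]
  have hzero : (((Finset.univ.filter (fun p : Fin N × Fin N =>
      ¬p.1 ≠ p.2 ∧ ¬True)).card : ℝ)) * (0:ℝ) = 0 := by ring
  linarith

/-- Variance bounds for several (bi)linear permutational statistics. -/
theorem stmt4 : ∃ C : ℝ, 0 < C ∧
    ∀ (N : ℕ), 2 ≤ N →
    ∀ (A B D : Matrix (Fin N) (Fin N) ℝ) (α β δ : ℝ),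
    (∀ i, (∑ j, A i j) = 0) → (∀ j, (∑ i, A i j) = 0) →
    (∀ i, (∑ j, B i j) = 0) → (∀ j, (∑ i, B i j) = 0) →
    (∀ i, (∑ j, D i j) = 0) → (∀ j, (∑ i, D i j) = 0) →
    (∀ i j, |A i j| ≤ α) → (∀ i j, |B i j| ≤ β) → (∀ i j, |D i j| ≤ δ) →
    ((∀ (M : Matrix (Fin N) (Fin N) ℝ) (B₀ : ℝ), (∀ i j, |M i j| ≤ B₀) →
        pvar (fun π => ∑ i, M i (π i)) ≤ C * (N : ℝ) * B₀ ^ 2) ∧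
      pvar (fun π => ∑ i, ∑ j, if i ≠ j then A i (π i) * B j (π j) else 0)
        ≤ C * (N : ℝ) ^ 2 * α ^ 2 * β ^ 2 ∧
      pvar (fun π => ∑ i, ∑ j, if i ≠ j then A i (π j) * B j (π i) else 0)
        ≤ C * (N : ℝ) ^ 2 * α ^ 2 * β ^ 2 ∧
      pvar (fun π => ∑ i, ∑ j, if i ≠ j then A i (π i) * B j (π j) * D i (π j) else 0)
        ≤ C * (N : ℝ) ^ 3 * α ^ 2 * β ^ 2 * δ ^ 2 ∧
      pvar (fun π => ∑ i, ∑ j, if i ≠ j then A i (π i) * B j (π i) * D i (π j) else 0)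
        ≤ C * (N : ℝ) ^ 3 * α ^ 2 * β ^ 2 * δ ^ 2) := by
  refine ⟨1000, by norm_num, ?_⟩
  intro N hN2 A B D α β δ hA1 hA2 hB1 hB2 hD1 hD2 hAb hBb hDb
  refine ⟨fun M B₀ hM => part_i hN2 M B₀ hM,
    part_ii hN2 A B α β hA1 hB1 hAb hBb,
    part_iii hN2 A B α β hA1 hB1 hAb hBb,
    part_iv hN2 A B D α β δ hA1 hAb hBb hDb,
    part_v hN2 A B D α β δ hD1 hAb hBb hDb⟩
end
end

section
/- In the complete-randomization setting, assume S(q,q) > 0 and N_q < N for every q, and let V*_Ŷ be the correlation matrix of V_Ŷ, i.e., V*_Ŷ(q,q') = V_Ŷ(q,q') / √(V_Ŷ(q,q) V_Ŷ(q',q')). Suppose max_q N_q ≤ (1−c)N for some 0 < c < 1, and suppose λ_min(V*_Ŷ) > 0 and λ_max(V*_Ŷ) ≤ σ² λ_min(V*_Ŷ) for some σ ≥ 1 (i.e., the condition number of V*_Ŷ is at most σ²). Then Fᵀ diag(N_q^{-1} S(q,q))_{q=1}^Q F ⪯ (σ²/c) · Fᵀ V_Ŷ F in the Loewner order; in particular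 Condition 1 holds with σ_F² = σ²/c. -/
open Finset Matrix MeasureTheory ProbabilityTheory
open scoped Classical

noncomputable section

/-- Probability with respect to the uniform distribution on permutations of `{1,…,N}`. -/
def pprob {N : ℕ} (p : Equiv.Perm (Fin N) → Prop) : ℝ :=
  pexp (fun π => if p π then (1 : ℝ) else 0)

/-- Mean potential outcome `Ȳ(q)`. -/
def Ybar {N Q : ℕ} (Y : Fin N → Fin Q → ℝ) (q : Fin Q) : ℝ :=
  (∑ i, Y i q) / (N : ℝ)

/-- Finite-population covariance `S(q,q')`. -/
def Svar {N Q : ℕ} (Y : Fin N → Fin Q → ℝ) (q q' : Fin Q) : ℝ :=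
  (∑ i, (Y i q - Ybar Y q) * (Y i q' - Ybar Y q')) / ((N : ℝ) - 1)

/-- Maximum absolute deviation `M_N(q)`. -/
def MNdev {N Q : ℕ} (Y : Fin N → Fin Q → ℝ) (q : Fin Q) : ℝ :=
  ⨆ i : Fin N, |Y i q - Ybar Y q|

/-- Sample mean `Ŷ_q` in arm `q` under the assignment `Z_i = z(π(i))`. -/
def Yhat {N Q : ℕ} (Y : Fin N → Fin Q → ℝ) (z : Fin N → Fin Q) (Nq : Fin Q → ℕ)
    (π : Equiv.Perm (Fin N)) (q : Fin Q) : ℝ :=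
  (∑ i, if z (π i) = q then Y i q else 0) / (Nq q : ℝ)

/-- The covariance matrix `V_Ŷ = diag(N_q⁻¹ S(q,q)) − N⁻¹ S`. -/
def VYmat {N Q : ℕ} (Y : Fin N → Fin Q → ℝ) (Nq : Fin Q → ℕ) :
    Matrix (Fin Q) (Fin Q) ℝ :=
  Matrix.of fun q q' =>
    (if q = q' then Svar Y q q / (Nq q : ℝ) else 0) - Svar Y q q' / (N : ℝ)

/-- Largest eigenvalue of a (symmetric) matrix, via the Rayleigh quotient. -/
def lamMax {n : Type*} [Fintype n] (A : Matrix n n ℝ) : ℝ :=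
  ⨆ x : {x : n → ℝ // (∑ i, x i ^ 2) = 1}, x.1 ⬝ᵥ A.mulVec x.1

/-- Standard normal cumulative distribution function. -/
def stdNormalCDF (t : ℝ) : ℝ :=
  ∫ x in Set.Iic t, (Real.sqrt (2 * Real.pi))⁻¹ * Real.exp (-(x ^ 2) / 2)

/-- The standard Gaussian measure on `ℝ^H`. -/
def gaussianPi (H : ℕ) : Measure (Fin H → ℝ) :=
  Measure.pi fun _ : Fin H => gaussianReal 0 1

/-- Condition 1 with parameter `σF`:
`Fᵀ diag(N_q⁻¹ S(q,q)) F ⪯ σF² Fᵀ V_Ŷ F` in the Loewner order. -/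
def CondOne {N Q H : ℕ} (Y : Fin N → Fin Q → ℝ) (Nq : Fin Q → ℕ)
    (F : Matrix (Fin Q) (Fin H) ℝ) (σF : ℝ) : Prop :=
  (σF ^ 2 • (Fᵀ * VYmat Y Nq * F) -
    Fᵀ * Matrix.diagonal (fun q => Svar Y q q / (Nq q : ℝ)) * F).PosSemidef

/-- Condition 2 (proper contrast) with parameters `c, c'`. -/
def CondTwo {Q H : ℕ} (F : Matrix (Fin Q) (Fin H) ℝ) (c c' : ℝ) : Prop :=
  (∀ q h, |F q h| ≤ c / (Q : ℝ)) ∧ c' / (Q : ℝ) ≤ lamMin (Fᵀ * F)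

/-- The positive semidefinite square root of a positive semidefinite matrix (as in the
older Mathlib, where this definition was provided). -/
def Matrix.PosSemidef.sqrt {n : Type*} [Fintype n] [DecidableEq n]
    {A : Matrix n n ℝ} (hA : A.PosSemidef) : Matrix n n ℝ :=
  hA.isHermitian.eigenvectorUnitary.1 * diagonal (Real.sqrt ∘ hA.isHermitian.eigenvalues) *
    (star hA.isHermitian.eigenvectorUnitary : Matrix n n ℝ)

/-- The standardized estimator `γ̃ = V_γ̂^{-1/2}(γ̂ − γ)`. -/
def tgam {N Q H : ℕ} (Y : Fin N → Fin Q → ℝ) (z : Fin N → Fin Q) (Nq : Fin Q → ℕ)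
    (F : Matrix (Fin Q) (Fin H) ℝ) (hpd : (Fᵀ * VYmat Y Nq * F).PosDef)
    (π : Equiv.Perm (Fin N)) : Fin H → ℝ :=
  ((hpd.posSemidef.sqrt)⁻¹).mulVec (Fᵀ.mulVec (Yhat Y z Nq π) - Fᵀ.mulVec (Ybar Y))


section Helpers

lemma quadE {n : Type*} [Fintype n] (A : Matrix n n ℝ) (v : n → ℝ) :
    v ⬝ᵥ A.mulVec v = ∑ i, ∑ j, v i * A i j * v j := by
  simp [dotProduct, Matrix.mulVec, Finset.mul_sum, mul_assoc]

lemma rayleigh_abs_le {n : Type*} [Fintype n] (A : Matrix n n ℝ)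
    (x : n → ℝ) (hx : ∑ i, x i ^ 2 = 1) :
    |x ⬝ᵥ A.mulVec x| ≤ ∑ i, ∑ j, |A i j| := by
  have hxb : ∀ i, |x i| ≤ 1 := by
    intro i
    have h1 : x i ^ 2 ≤ 1 := hx ▸ Finset.single_le_sum
      (f := fun j => x j ^ 2) (fun j _ => sq_nonneg _) (Finset.mem_univ i)
    nlinarith [abs_nonneg (x i), sq_abs (x i)]
  rw [quadE]
  calc |∑ i, ∑ j, x i * A i j * x j| ≤ ∑ i, |∑ j, x i * A i j * x j| :=
        Finset.abs_sum_le_sum_abs _ _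
    _ ≤ ∑ i, ∑ j, |x i * A i j * x j| :=
        Finset.sum_le_sum fun i _ => Finset.abs_sum_le_sum_abs _ _
    _ ≤ ∑ i, ∑ j, |A i j| := by
        refine Finset.sum_le_sum fun i _ => Finset.sum_le_sum fun j _ => ?_
        rw [abs_mul, abs_mul]
        have h : |x i| * |A i j| * |x j| ≤ 1 * |A i j| * 1 :=
          mul_le_mul (mul_le_mul_of_nonneg_right (hxb i) (abs_nonneg _)) (hxb j)
            (abs_nonneg _) (by positivity)
        simpa using h

lemma lamMin_le_rayleigh {n : Type*} [Fintype n] (A : Matrix n n ℝ)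
    (x : n → ℝ) (hx : ∑ i, x i ^ 2 = 1) :
    lamMin A ≤ x ⬝ᵥ A.mulVec x := by
  refine ciInf_le ⟨-(∑ i, ∑ j, |A i j|), ?_⟩ (⟨x, hx⟩ : {x : n → ℝ // (∑ i, x i ^ 2) = 1})
  rintro r ⟨y, rfl⟩
  have := rayleigh_abs_le A y.1 y.2
  simp only [abs_le] at this
  linarith [this.1]

lemma rayleigh_le_lamMax {n : Type*} [Fintype n] (A : Matrix n n ℝ)
    (x : n → ℝ) (hx : ∑ i, x i ^ 2 = 1) :
    x ⬝ᵥ A.mulVec x ≤ lamMax A := by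
  refine le_ciSup (f := fun x : {x : n → ℝ // (∑ i, x i ^ 2) = 1} => x.1 ⬝ᵥ A.mulVec x.1)
    ⟨∑ i, ∑ j, |A i j|, ?_⟩ ⟨x, hx⟩
  rintro r ⟨y, rfl⟩
  have := rayleigh_abs_le A y.1 y.2
  simp only [abs_le] at this
  exact this.2

lemma lamMin_mul_le_rayleigh {n : Type*} [Fintype n] (A : Matrix n n ℝ) (w : n → ℝ) :
    lamMin A * (∑ i, w i ^ 2) ≤ w ⬝ᵥ A.mulVec w := by
  by_cases h : (∑ i, w i ^ 2) = 0
  · have hw : ∀ i ∈ Finset.univ, w i ^ 2 = 0 :=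
      (Finset.sum_eq_zero_iff_of_nonneg (fun i _ => sq_nonneg _)).1 h
    have hw0 : w = 0 := funext fun i =>
      pow_eq_zero_iff (n := 2) (by norm_num) |>.1 (hw i (Finset.mem_univ i))
    simp [h, hw0]
  · have hs : 0 < ∑ i, w i ^ 2 :=
      lt_of_le_of_ne (Finset.sum_nonneg fun i _ => sq_nonneg _) (Ne.symm h)
    set s := ∑ i, w i ^ 2 with hsdef
    set t := Real.sqrt s with htdef
    have ht : 0 < t := Real.sqrt_pos.2 hs
    have ht2 : t ^ 2 = s := Real.sq_sqrt hs.le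
    set u := fun i => w i / t with hudef
    have hu1 : ∑ i, u i ^ 2 = 1 := by
      simp only [hudef, div_pow, ht2]
      rw [← Finset.sum_div, ← hsdef, div_self h]
    have hq : u ⬝ᵥ A.mulVec u = (w ⬝ᵥ A.mulVec w) / s := by
      rw [quadE, quadE, Finset.sum_div]
      refine Finset.sum_congr rfl fun i _ => ?_
      rw [Finset.sum_div]
      refine Finset.sum_congr rfl fun j _ => ?_
      simp only [hudef]
      have : w i / t * A i j * (w j / t) = (w i * A i j * w j) / t ^ 2 := by ring
      rw [this, ht2]
    have := lamMin_le_rayleigh A u hu1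
    rw [hq, le_div_iff₀ hs] at this
    linarith

end Helpers

/-- Lemma 2(ii): bounded arm sizes and bounded condition number of the correlation
matrix of `V_Ŷ` imply Condition 1 with `σ_F² = σ²/c`. -/
theorem stmt9 (N Q H : ℕ) (hN : 2 ≤ N) (hQ : 1 ≤ Q)
    (Nq : Fin Q → ℕ) (hNq : ∀ q, 1 ≤ Nq q) (hsum : (∑ q, Nq q) = N)
    (Y : Fin N → Fin Q → ℝ) (F : Matrix (Fin Q) (Fin H) ℝ)
    (hS : ∀ q, 0 < Svar Y q q) (hNlt : ∀ q, Nq q < N)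
    (Vstar : Matrix (Fin Q) (Fin Q) ℝ)
    (hVstar : ∀ q q', Vstar q q' =
      VYmat Y Nq q q' / Real.sqrt (VYmat Y Nq q q * VYmat Y Nq q' q'))
    (c : ℝ) (hc0 : 0 < c) (hc1 : c < 1)
    (hmax : ∀ q, (Nq q : ℝ) ≤ (1 - c) * (N : ℝ))
    (σ : ℝ) (hσ : 1 ≤ σ)
    (hlmin : 0 < lamMin Vstar)
    (hcond : lamMax Vstar ≤ σ ^ 2 * lamMin Vstar) :
    ((σ ^ 2 / c) • (Fᵀ * VYmat Y Nq * F)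
      - Fᵀ * Matrix.diagonal (fun q => Svar Y q q / (Nq q : ℝ)) * F).PosSemidef := by
  classical
  set V := VYmat Y Nq with hV
  set D := (Matrix.diagonal (fun q => Svar Y q q / (Nq q : ℝ)) : Matrix (Fin Q) (Fin Q) ℝ)
    with hD
  have hNq0 : ∀ q, (0:ℝ) < (Nq q : ℝ) := fun q => by exact_mod_cast (hNq q)
  have hN0 : (0:ℝ) < (N:ℝ) := by
    have : (2:ℝ) ≤ (N:ℝ) := by exact_mod_cast hN
    linarith
  have hdq : ∀ q, V q q = Svar Y q q / (Nq q : ℝ) - Svar Y q q / (N : ℝ) := by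
    intro q; simp [hV, VYmat]
  have hdpos : ∀ q, 0 < V q q := by
    intro q
    rw [hdq q]
    have h1 : (Nq q : ℝ) < N := by exact_mod_cast hNlt q
    have h2 : Svar Y q q / (N:ℝ) < Svar Y q q / (Nq q : ℝ) :=
      div_lt_div_of_pos_left (hS q) (hNq0 q) h1
    linarith
  set r := fun q => Real.sqrt (V q q) with hr
  have hrpos : ∀ q, 0 < r q := fun q => Real.sqrt_pos.2 (hdpos q)
  have hr2 : ∀ q, r q ^ 2 = V q q := fun q => Real.sq_sqrt (hdpos q).le
  have hVV : ∀ q q', V q q' = r q * Vstar q q' * r q' := by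
    intro q q'
    rw [hVstar q q', Real.sqrt_mul (hdpos q).le]
    have h1 : r q ≠ 0 := (hrpos q).ne'
    have h2 : r q' ≠ 0 := (hrpos q').ne'
    show V q q' = r q * (V q q' / (r q * r q')) * r q'
    field_simp
  -- 1 ≤ σ² · λmin(V*)
  have q0 : Fin Q := ⟨0, hQ⟩
  have he : ∑ i, (Pi.single q0 1 : Fin Q → ℝ) i ^ 2 = 1 := by
    simp [Pi.single_apply, sq, ite_mul, Finset.sum_ite_eq']
  have heq : (Pi.single q0 1 : Fin Q → ℝ) ⬝ᵥ Vstar.mulVec (Pi.single q0 1) = Vstar q0 q0 := by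
    rw [quadE]
    simp [Pi.single_apply, ite_mul, mul_ite, Finset.sum_ite_eq']
  have hV1 : Vstar q0 q0 = 1 := by
    rw [hVstar, Real.sqrt_mul_self (hdpos q0).le]
    exact div_self (hdpos q0).ne'
  have hone : 1 ≤ σ ^ 2 * lamMin Vstar := by
    have h1 := rayleigh_le_lamMax Vstar _ he
    rw [heq, hV1] at h1
    linarith
  refine Matrix.PosSemidef.of_dotProduct_mulVec_nonneg ?_ ?_
  · -- Hermitian part
    have hSsym : ∀ q q', Svar Y q q' = Svar Y q' q := by
      intro q q'
      unfold Svar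
      congr 1
      exact Finset.sum_congr rfl fun i _ => mul_comm _ _
    have hVsym : V.IsHermitian := by
      rw [Matrix.IsHermitian, Matrix.conjTranspose_eq_transpose_of_trivial]
      ext i j
      simp only [Matrix.transpose_apply, hV, VYmat, Matrix.of_apply]
      by_cases h : i = j
      · subst h; rfl
      · simp [h, Ne.symm h, hSsym i j]
    have h1 : (Fᵀ * V * F).IsHermitian := by
      have := Matrix.isHermitian_conjTranspose_mul_mul F hVsym
      rwa [Matrix.conjTranspose_eq_transpose_of_trivial] at this
    have h2 : (Fᵀ * D * F).IsHermitian := by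
      have := Matrix.isHermitian_conjTranspose_mul_mul F
        (Matrix.isHermitian_diagonal (fun q => Svar Y q q / (Nq q : ℝ)))
      rwa [Matrix.conjTranspose_eq_transpose_of_trivial] at this
    rw [Matrix.IsHermitian, Matrix.conjTranspose_sub, Matrix.conjTranspose_smul,
      h1.eq, h2.eq, star_trivial]
  · intro x
    have hsx : star x = x := funext fun i => star_trivial _
    rw [hsx]
    have hexp : ((σ ^ 2 / c) • (Fᵀ * V * F) - Fᵀ * D * F).mulVec x
        = (σ ^ 2 / c) • ((Fᵀ * V * F).mulVec x) - (Fᵀ * D * F).mulVec x := by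
      rw [Matrix.sub_mulVec, Matrix.smul_mulVec]
    rw [hexp, dotProduct_sub, dotProduct_smul]
    have key : ∀ A : Matrix (Fin Q) (Fin Q) ℝ,
        x ⬝ᵥ (Fᵀ * A * F).mulVec x = (F.mulVec x) ⬝ᵥ A.mulVec (F.mulVec x) := fun A => by
      rw [← Matrix.mulVec_mulVec, ← Matrix.mulVec_mulVec, Matrix.dotProduct_mulVec,
        Matrix.vecMul_transpose]
    rw [key, key]
    set v := F.mulVec x with hv
    set w := fun q => r q * v q with hw
    have hquadD : v ⬝ᵥ D.mulVec v = ∑ q, Svar Y q q / (Nq q : ℝ) * v q ^ 2 := by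
      rw [quadE]
      refine Finset.sum_congr rfl fun i _ => ?_
      have : ∑ j, v i * D i j * v j = v i * (Svar Y i i / (Nq i : ℝ)) * v i := by
        simp [hD, Matrix.diagonal_apply, mul_ite, ite_mul, Finset.sum_ite_eq']
      rw [this]; ring
    have hquadV : v ⬝ᵥ V.mulVec v = w ⬝ᵥ Vstar.mulVec w := by
      rw [quadE, quadE]
      refine Finset.sum_congr rfl fun i _ => Finset.sum_congr rfl fun j _ => ?_
      rw [hVV i j]
      simp only [hw]
      ring
    have hsw : ∑ q, w q ^ 2 = ∑ q, V q q * v q ^ 2 := by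
      refine Finset.sum_congr rfl fun q _ => ?_
      simp only [hw]
      rw [mul_pow, hr2]
    have hDle : ∀ q, Svar Y q q / (Nq q : ℝ) * v q ^ 2 ≤ (1 / c) * (V q q * v q ^ 2) := by
      intro q
      have hkey : c * (Svar Y q q / (Nq q : ℝ)) ≤ V q q := by
        rw [hdq q]
        have hstep : Svar Y q q / (N : ℝ) ≤ (1 - c) * (Svar Y q q / (Nq q : ℝ)) := by
          rw [mul_div_assoc', div_le_div_iff₀ hN0 (hNq0 q)]
          nlinarith [hmax q, (hS q).le]
        have hring : c * (Svar Y q q / (Nq q : ℝ))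
            = Svar Y q q / (Nq q : ℝ) - (1 - c) * (Svar Y q q / (Nq q : ℝ)) := by ring
        rw [hring]
        linarith
      have h1 : Svar Y q q / (Nq q : ℝ) ≤ (1 / c) * V q q := by
        rw [one_div, inv_mul_eq_div, le_div_iff₀ hc0]
        linarith [hkey, mul_comm c (Svar Y q q / (Nq q : ℝ)) ▸ hkey]
      have := mul_le_mul_of_nonneg_right h1 (sq_nonneg (v q))
      linarith [this, (by ring : (1 / c) * V q q * v q ^ 2 = (1 / c) * (V q q * v q ^ 2))]
    have h1 : ∑ q, Svar Y q q / (Nq q : ℝ) * v q ^ 2 ≤ (1 / c) * ∑ q, w q ^ 2 := by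
      rw [hsw, Finset.mul_sum]
      exact Finset.sum_le_sum fun q _ => hDle q
    have hraw := lamMin_mul_le_rayleigh Vstar w
    have hswnn : 0 ≤ ∑ q, w q ^ 2 := Finset.sum_nonneg fun q _ => sq_nonneg _
    have h2 : ∑ q, w q ^ 2 ≤ σ ^ 2 * (w ⬝ᵥ Vstar.mulVec w) := by
      nlinarith [mul_le_mul_of_nonneg_left hraw (sq_nonneg σ),
        mul_le_mul_of_nonneg_right hone hswnn]
    have h3 : (1 / c) * (∑ q, w q ^ 2) ≤ (1 / c) * (σ ^ 2 * (w ⬝ᵥ Vstar.mulVec w)) :=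
      mul_le_mul_of_nonneg_left h2 (by positivity)
    rw [hquadD, hquadV]
    have hfin : (σ ^ 2 / c) • (w ⬝ᵥ Vstar.mulVec w)
        = (1 / c) * (σ ^ 2 * (w ⬝ᵥ Vstar.mulVec w)) := by
      simp [smul_eq_mul]; ring
    rw [hfin]
    linarith
end
end
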